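/- arXiv:0712.0152 — 3 statements merged into one kernel-verified Lean document; each statement's English description precedes it below -/
import Mathlib

section
/- Let n ≥ 1, let a < t be real numbers, let 0 < α ≤ 1, let L : ℝ × ℝⁿ × ℝⁿ → ℝ be of class C², and let q : ℝ → ℝⁿ be of class C² on [a,t]. Suppose that for every C² function h : ℝ → ℝⁿ with h(a) = 0 and h(t) = 0, the function ε ↦ (1/Γ(α)) ∫_a^t L(θ, q(θ) + ε·h(θ), q'(θ) + ε·h'(θ)) · (t−θ)^{α−1} dθ has derivative 0 at ε = 0. Then for every θ ∈ (a, t): ∂₂L(θ, q(θ), q'(θ)) − (d/dθ)[∂₃L(θ, q(θ), q'(θ))] = ((1−α)/(t−θ)) · ∂₃L(θ, q(θ), q'(θ)). -/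
open scoped RealInnerProductSpace
open MeasureTheory Set Metric intervalIntegral

section helpers

variable {E : Type*} [NormedAddCommGroup E] [InnerProductSpace ℝ E] [CompleteSpace E]

/-- inclusion `u ↦ (0, u, 0)` as a CLM -/
noncomputable def falvaC2 (E : Type*) [NormedAddCommGroup E] [InnerProductSpace ℝ E] :
    E →L[ℝ] ℝ × E × E :=
  (0 : E →L[ℝ] ℝ).prod ((ContinuousLinearMap.id ℝ E).prod 0)

/-- inclusion `u ↦ (0, 0, u)` as a CLM -/
noncomputable def falvaC3 (E : Type*) [NormedAddCommGroup E] [InnerProductSpace ℝ E] :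
    E →L[ℝ] ℝ × E × E :=
  (0 : E →L[ℝ] ℝ).prod ((0 : E →L[ℝ] E).prod (ContinuousLinearMap.id ℝ E))

omit [CompleteSpace E] in
lemma falva_hasFDerivAt_partial2 (L : ℝ × E × E → ℝ) {θ : ℝ} {x d : E}
    (hL : DifferentiableAt ℝ L (θ, x, d)) :
    HasFDerivAt (fun y => L (θ, y, d)) ((fderiv ℝ L (θ, x, d)).comp (falvaC2 _)) x := by
  have hj : HasFDerivAt (fun y : E => ((θ : ℝ), y, d)) (falvaC2 _) x :=
    HasFDerivAt.prodMk (hasFDerivAt_const θ x) (HasFDerivAt.prodMk (hasFDerivAt_id x) (hasFDerivAt_const d x))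
  exact hL.hasFDerivAt.comp x hj

omit [CompleteSpace E] in
lemma falva_hasFDerivAt_partial3 (L : ℝ × E × E → ℝ) {θ : ℝ} {x d : E}
    (hL : DifferentiableAt ℝ L (θ, x, d)) :
    HasFDerivAt (fun v => L (θ, x, v)) ((fderiv ℝ L (θ, x, d)).comp (falvaC3 _)) d := by
  have hj : HasFDerivAt (fun v : E => ((θ : ℝ), x, v)) (falvaC3 _) d :=
    HasFDerivAt.prodMk (hasFDerivAt_const θ d) (HasFDerivAt.prodMk (hasFDerivAt_const x d) (hasFDerivAt_id d))
  exact hL.hasFDerivAt.comp d hj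

lemma falva_gradient_partial2 (L : ℝ × E × E → ℝ) {θ : ℝ} {x d : E}
    (hL : DifferentiableAt ℝ L (θ, x, d)) :
    gradient (fun y => L (θ, y, d)) x
      = (InnerProductSpace.toDual ℝ _).symm ((fderiv ℝ L (θ, x, d)).comp (falvaC2 _)) :=
  ((falva_hasFDerivAt_partial2 L hL).hasGradientAt).gradient

lemma falva_gradient_partial3 (L : ℝ × E × E → ℝ) {θ : ℝ} {x d : E}
    (hL : DifferentiableAt ℝ L (θ, x, d)) :
    gradient (fun v => L (θ, x, v)) d
      = (InnerProductSpace.toDual ℝ _).symm ((fderiv ℝ L (θ, x, d)).comp (falvaC3 _)) :=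
  ((falva_hasFDerivAt_partial3 L hL).hasGradientAt).gradient

lemma falva_inner_gradient_partial2 (L : ℝ × E × E → ℝ) {θ : ℝ} {x d : E}
    (hL : DifferentiableAt ℝ L (θ, x, d)) (u : E) :
    ⟪gradient (fun y => L (θ, y, d)) x, u⟫ = fderiv ℝ L (θ, x, d) (0, u, 0) := by
  rw [falva_gradient_partial2 L hL, InnerProductSpace.toDual_symm_apply]
  rfl

lemma falva_inner_gradient_partial3 (L : ℝ × E × E → ℝ) {θ : ℝ} {x d : E}
    (hL : DifferentiableAt ℝ L (θ, x, d)) (u : E) :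
    ⟪gradient (fun v => L (θ, x, v)) d, u⟫ = fderiv ℝ L (θ, x, d) (0, 0, u) := by
  rw [falva_gradient_partial3 L hL, InnerProductSpace.toDual_symm_apply]
  rfl

lemma falva_fderiv_split (L : ℝ × E × E → ℝ) {θ : ℝ} {x d : E}
    (hL : DifferentiableAt ℝ L (θ, x, d)) (u u' : E) :
    fderiv ℝ L (θ, x, d) (0, u, u')
      = ⟪gradient (fun y => L (θ, y, d)) x, u⟫ + ⟪gradient (fun v => L (θ, x, v)) d, u'⟫ := by
  rw [falva_inner_gradient_partial2 L hL, falva_inner_gradient_partial3 L hL]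
  have : ((0 : ℝ), u, u') = ((0 : ℝ), u, (0 : E)) + ((0 : ℝ), (0 : E), u') := by
    simp [Prod.ext_iff]
  rw [this, map_add]

/-- smoothness of `θ ↦ (toDual).symm ((fderiv L (γ θ)).comp c)` -/
lemma falva_contDiffOn_gradient_comp (L : ℝ × E × E → ℝ) (hL : ContDiff ℝ 2 L)
    (c : E →L[ℝ] ℝ × E × E)
    {γ : ℝ → ℝ × E × E} {s : Set ℝ} (hγ : ContDiffOn ℝ 1 γ s) :
    ContDiffOn ℝ 1
      (fun θ => (InnerProductSpace.toDual ℝ _).symm ((fderiv ℝ L (γ θ)).comp c)) s := by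
  have h1 : ContDiff ℝ 1 (fderiv ℝ L) := hL.fderiv_right (by norm_num)
  have h2 : ContDiffOn ℝ 1 (fun θ => fderiv ℝ L (γ θ)) s := h1.comp_contDiffOn hγ
  have h3 : ContDiffOn ℝ 1 (fun θ => (fderiv ℝ L (γ θ)).comp c) s :=
    h2.clm_comp contDiffOn_const
  exact ((InnerProductSpace.toDual ℝ _).symm.toContinuousLinearEquiv.toContinuousLinearMap.contDiff
    (n := 1)).comp_contDiffOn h3

end helpers

set_option maxHeartbeats 1000000 in
/-- **Euler–Lagrange equations for first-order FALVA problems.**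
If `q` gives a stationary value to the FALVA functional
`I[q] = (1/Γ(α)) ∫_a^t L(θ, q(θ), q'(θ)) (t-θ)^(α-1) dθ`
(in the sense that the first variation vanishes for every `C²` variation `h`
vanishing at `a` and `t`), then `q` satisfies the FALVA Euler–Lagrange equation
`∂₂L - d/dθ ∂₃L = ((1-α)/(t-θ)) ∂₃L` on `(a, t)`. -/
theorem falva_first_order_euler_lagrange
    (n : ℕ) (hn : 1 ≤ n) (a t α : ℝ) (hat : a < t) (hα0 : 0 < α) (hα1 : α ≤ 1)
    (L : ℝ × EuclideanSpace ℝ (Fin n) × EuclideanSpace ℝ (Fin n) → ℝ)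
    (hL : ContDiff ℝ 2 L)
    (q : ℝ → EuclideanSpace ℝ (Fin n))
    (hq : ContDiffOn ℝ 2 q (Set.Icc a t))
    (hstat : ∀ h : ℝ → EuclideanSpace ℝ (Fin n),
      ContDiff ℝ 2 h → h a = 0 → h t = 0 →
      HasDerivAt (fun ε : ℝ => (1 / Real.Gamma α) *
          ∫ θ in a..t,
            L (θ, q θ + ε • h θ, deriv q θ + ε • deriv h θ) * (t - θ) ^ (α - 1))
        0 0) :
    ∀ θ ∈ Set.Ioo a t,
      gradient (fun y => L (θ, y, deriv q θ)) (q θ)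
          - deriv (fun s => gradient (fun v => L (s, q s, v)) (deriv q s)) θ
        = ((1 - α) / (t - θ)) • gradient (fun v => L (θ, q θ, v)) (deriv q θ) := by
  intro θ₀ hθ₀
  -- notation
  set w : ℝ → ℝ := fun s => (t - s) ^ (α - 1) with hw_def
  set g₂ := fun s => gradient (fun y => L (s, y, deriv q s)) (q s) with hg₂_def
  set g₃ := fun s => gradient (fun v => L (s, q s, v)) (deriv q s) with hg₃_def
  set P := fun s => w s • g₃ s with hP_def
  set G := fun s => w s • g₂ s - deriv P s with hG_def
  have hLd : Differentiable ℝ L := hL.differentiable two_ne_zero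
  -- basic smoothness facts
  have hqIoo : ContDiffOn ℝ 2 q (Set.Ioo a t) := hq.mono Set.Ioo_subset_Icc_self
  have hdq : ContDiffOn ℝ 1 (deriv q) (Set.Ioo a t) :=
    hqIoo.deriv_of_isOpen isOpen_Ioo (by norm_num)
  have hγ : ContDiffOn ℝ 1 (fun s => ((s : ℝ), q s, deriv q s)) (Set.Ioo a t) :=
    contDiffOn_id.prodMk ((hqIoo.of_le one_le_two).prodMk hdq)
  have hg₂eq : g₂ = fun s => (InnerProductSpace.toDual ℝ _).symm
      ((fderiv ℝ L (s, q s, deriv q s)).comp (falvaC2 _)) :=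
    funext fun s => falva_gradient_partial2 L (hLd _)
  have hg₃eq : g₃ = fun s => (InnerProductSpace.toDual ℝ _).symm
      ((fderiv ℝ L (s, q s, deriv q s)).comp (falvaC3 _)) :=
    funext fun s => falva_gradient_partial3 L (hLd _)
  have hg₂cd : ContDiffOn ℝ 1 g₂ (Set.Ioo a t) := by
    rw [hg₂eq]; exact falva_contDiffOn_gradient_comp L hL _ hγ
  have hg₃cd : ContDiffOn ℝ 1 g₃ (Set.Ioo a t) := by
    rw [hg₃eq]; exact falva_contDiffOn_gradient_comp L hL _ hγ
  have hwd : ∀ s ∈ Set.Ioo a t, HasDerivAt w ((1 - α) * (t - s) ^ (α - 2)) s := by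
    intro s hs
    have h0 : t - s ≠ 0 := sub_ne_zero.mpr (ne_of_gt hs.2)
    have hrp := Real.hasDerivAt_rpow_const (x := t - s) (p := α - 1) (Or.inl h0)
    have hsub : HasDerivAt (fun y : ℝ => t - y) (-1) s := by
      simpa using (hasDerivAt_id s).const_sub t
    have := hrp.comp s hsub
    have h2 : (α - 1) * (t - s) ^ (α - 1 - 1) * (-1) = (1 - α) * (t - s) ^ (α - 2) := by
      rw [show α - 1 - 1 = α - 2 by ring]; ring
    rw [h2] at this
    exact this
  have hwcd : ContDiffOn ℝ 1 w (Set.Ioo a t) := by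
    intro s hs
    have h0 : t - s ≠ 0 := sub_ne_zero.mpr (ne_of_gt hs.2)
    exact ((Real.contDiffAt_rpow_const_of_ne h0).comp s
      (contDiffAt_const.sub contDiffAt_id)).contDiffWithinAt
  have hPcd : ContDiffOn ℝ 1 P (Set.Ioo a t) := hwcd.smul hg₃cd
  have hg₃d : ∀ s ∈ Set.Ioo a t, HasDerivAt g₃ (deriv g₃ s) s := fun s hs =>
    ((hg₃cd.differentiableOn one_ne_zero).differentiableAt (isOpen_Ioo.mem_nhds hs)).hasDerivAt
  have hPd : ∀ s ∈ Set.Ioo a t, HasDerivAt P (deriv P s) s := fun s hs =>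
    ((hPcd.differentiableOn one_ne_zero).differentiableAt (isOpen_Ioo.mem_nhds hs)).hasDerivAt
  have hPderiv : ∀ s ∈ Set.Ioo a t,
      deriv P s = w s • deriv g₃ s + ((1 - α) * (t - s) ^ (α - 2)) • g₃ s := by
    intro s hs
    exact ((hwd s hs).smul (hg₃d s hs)).deriv
  have hGc : ContinuousOn G (Set.Ioo a t) :=
    ((hwcd.continuousOn).smul (hg₂cd.continuousOn)).sub
      (hPcd.continuousOn_deriv_of_isOpen isOpen_Ioo le_rfl)
  -- the variational vanishing for bump variations
  have hkey : ∀ (θ₁ θ₂ : ℝ), a < θ₁ → θ₁ < θ₂ → θ₂ < t →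
      ∀ (φ : ContDiffBump θ₀), tsupport ⇑φ ⊆ Set.Ioo θ₁ θ₂ →
      ∀ v : EuclideanSpace ℝ (Fin n), (∫ s in θ₁..θ₂, φ s * ⟪G s, v⟫) = 0 := by
    intro θ₁ θ₂ hθ₁ h12 hθ₂ φ hsupp v
    have hIccsub : Set.Icc θ₁ θ₂ ⊆ Set.Ioo a t := fun s hs =>
      ⟨lt_of_lt_of_le hθ₁ hs.1, lt_of_le_of_lt hs.2 hθ₂⟩
    set h : ℝ → EuclideanSpace ℝ (Fin n) := fun s => φ s • v with hh_def
    have hh2 : ContDiff ℝ 2 h := (φ.contDiff (n := 2)).smul contDiff_const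
    have hder : ∀ s, HasDerivAt h (deriv (⇑φ) s • v) s := fun s =>
      ((((φ.contDiff (n := 1)).differentiable one_ne_zero) s).hasDerivAt).smul_const v
    have hderiv_h : deriv h = fun s => deriv (⇑φ) s • v := funext fun s => (hder s).deriv
    have hh_cont : Continuous h := hh2.continuous
    have hh'_cont : Continuous (deriv h) := by
      rw [hderiv_h]
      exact ((φ.contDiff (n := 1)).continuous_deriv le_rfl).smul continuous_const
    have hh_ts : ∀ s, s ∉ tsupport ⇑φ → h s = 0 := fun s hs => by
      rw [hh_def]; simp [image_eq_zero_of_notMem_tsupport hs]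
    have hh_ts' : ∀ s, s ∉ tsupport ⇑φ → deriv h s = 0 := fun s hs => by
      rw [hderiv_h]
      simp [Function.notMem_support.mp (fun hmem => hs (support_deriv_subset hmem))]
    have ha0 : h a = 0 := hh_ts a (fun hmem => absurd (hsupp hmem).1 (by linarith))
    have ht0 : h t = 0 := hh_ts t (fun hmem => absurd (hsupp hmem).2 (by linarith))
    -- interval integrability of the weight
    have hwInt : IntervalIntegrable w volume a t := by
      have h1 : IntervalIntegrable (fun x : ℝ => x ^ (α - 1)) volume (t - a) (t - t) :=
        intervalIntegrable_rpow' (by linarith)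
      have h2 := h1.comp_sub_left t
      rw [hw_def]
      simpa using h2
    have huIoc : Set.uIoc a t = Set.Ioc a t := Set.uIoc_of_le hat.le
    -- measurability
    have m1 : AEStronglyMeasurable q (volume.restrict (Set.Ioc a t)) :=
      (hq.continuousOn.mono Set.Ioc_subset_Icc_self).aestronglyMeasurable measurableSet_Ioc
    have m2 : AEStronglyMeasurable (deriv q) (volume.restrict (Set.Ioc a t)) :=
      (measurable_deriv q).aestronglyMeasurable
    have m4 : AEStronglyMeasurable w (volume.restrict (Set.Ioc a t)) :=
      hwInt.1.aestronglyMeasurable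
    have hms : ∀ ε : ℝ, AEStronglyMeasurable
        (fun s => ((s : ℝ), q s + ε • h s, deriv q s + ε • deriv h s))
        (volume.restrict (Set.Ioc a t)) := fun ε =>
      aestronglyMeasurable_id.prodMk
        ((m1.add (hh_cont.aestronglyMeasurable.const_smul ε)).prodMk
          (m2.add (hh'_cont.aestronglyMeasurable.const_smul ε)))
    have hFmeas : ∀ ε : ℝ, AEStronglyMeasurable
        (fun s => L (s, q s + ε • h s, deriv q s + ε • deriv h s) * (t - s) ^ (α - 1))
        (volume.restrict (Set.uIoc a t)) := by
      rw [huIoc]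
      exact fun ε => (hL.continuous.comp_aestronglyMeasurable (hms ε)).mul m4
    -- integrability of the unperturbed integrand
    have hdW_cont : ContinuousOn (derivWithin q (Set.Icc a t)) (Set.Icc a t) :=
      hq.continuousOn_derivWithin (uniqueDiffOn_Icc hat) (by norm_num)
    have hdWeq : ∀ s ∈ Set.Ioo a t, deriv q s = derivWithin q (Set.Icc a t) s := fun s hs =>
      (derivWithin_of_mem_nhds (Icc_mem_nhds hs.1 hs.2)).symm
    have hK₀ : IsCompact ((fun s => ((s : ℝ), q s, derivWithin q (Set.Icc a t) s)) ''
        (Set.Icc a t)) :=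
      isCompact_Icc.image_of_continuousOn
        (continuousOn_id.prodMk (hq.continuousOn.prodMk hdW_cont))
    obtain ⟨C₀, hC₀⟩ := hK₀.exists_bound_of_continuousOn hL.continuous.continuousOn
    have hae_Ioo : ∀ᵐ s ∂(volume.restrict (Set.uIoc a t)), s ∈ Set.Ioo a t := by
      rw [huIoc]
      have h1 : ∀ᵐ (s : ℝ) ∂(volume.restrict (Set.Ioc a t)), s ∈ Set.Ioc a t :=
        MeasureTheory.ae_restrict_mem measurableSet_Ioc
      have h2 : ∀ᵐ (s : ℝ) ∂volume, s ≠ t := by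
        refine MeasureTheory.ae_iff.mpr ?_
        simp only [ne_eq, not_not, Set.setOf_eq_eq_singleton]
        exact Real.volume_singleton
      filter_upwards [h1, MeasureTheory.ae_restrict_of_ae h2] with s hs hsne
      exact ⟨hs.1, lt_of_le_of_ne hs.2 hsne⟩
    have hFint : IntervalIntegrable
        (fun s => L (s, q s + (0:ℝ) • h s, deriv q s + (0:ℝ) • deriv h s) * (t - s) ^ (α - 1))
        volume a t := by
      refine (hwInt.const_mul C₀).mono_fun (hFmeas 0) ?_
      filter_upwards [hae_Ioo] with s hs
      have he : q s + (0:ℝ) • h s = q s := by simp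
      have he' : deriv q s + (0:ℝ) • deriv h s = deriv q s := by simp
      rw [he, he']
      have hmem : ((s : ℝ), q s, deriv q s) ∈ (fun s => ((s : ℝ), q s,
          derivWithin q (Set.Icc a t) s)) '' (Set.Icc a t) := by
        refine ⟨s, Set.Ioo_subset_Icc_self hs, ?_⟩
        show ((s : ℝ), q s, derivWithin q (Set.Icc a t) s) = ((s : ℝ), q s, deriv q s)
        rw [← hdWeq s hs]
      have hb := hC₀ _ hmem
      rw [norm_mul, norm_mul]
      refine mul_le_mul (le_trans hb (le_abs_self C₀)) le_rfl (norm_nonneg _) (abs_nonneg _)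
    -- measurability of the derivative integrand
    have hF'meas : AEStronglyMeasurable
        (fun s => (fderiv ℝ L (s, q s + (0:ℝ) • h s, deriv q s + (0:ℝ) • deriv h s))
            (0, h s, deriv h s) * (t - s) ^ (α - 1))
        (volume.restrict (Set.uIoc a t)) := by
      rw [huIoc]
      have hA : AEStronglyMeasurable
          (fun s => fderiv ℝ L (s, q s + (0:ℝ) • h s, deriv q s + (0:ℝ) • deriv h s))
          (volume.restrict (Set.Ioc a t)) :=
        (hL.continuous_fderiv (by norm_num)).comp_aestronglyMeasurable (hms 0)
      have hb : Continuous (fun s => (((0:ℝ), h s, deriv h s) :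
          ℝ × EuclideanSpace ℝ (Fin n) × EuclideanSpace ℝ (Fin n))) :=
        continuous_const.prodMk (hh_cont.prodMk hh'_cont)
      exact ((isBoundedBilinearMap_apply.continuous).comp_aestronglyMeasurable
        (hA.prodMk hb.aestronglyMeasurable)).mul m4
    -- uniform bound
    have hKc : IsCompact ((fun p : ℝ × ℝ =>
        ((p.1 : ℝ), q p.1 + p.2 • h p.1, deriv q p.1 + p.2 • deriv h p.1)) ''
        (Set.Icc θ₁ θ₂ ×ˢ Set.Icc (-1 : ℝ) 1)) := by
      refine (isCompact_Icc.prod isCompact_Icc).image_of_continuousOn ?_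
      have hfst : Set.MapsTo (Prod.fst : ℝ × ℝ → ℝ) (Set.Icc θ₁ θ₂ ×ˢ Set.Icc (-1 : ℝ) 1)
          (Set.Icc θ₁ θ₂) := fun p hp => hp.1
      refine (continuous_fst.continuousOn).prodMk (ContinuousOn.prodMk ?_ ?_)
      · refine ContinuousOn.add ?_ ((continuous_snd.smul (hh_cont.comp continuous_fst)).continuousOn)
        exact (hq.continuousOn.mono (Set.Icc_subset_Icc hθ₁.le hθ₂.le)).comp
          continuous_fst.continuousOn hfst
      · refine ContinuousOn.add ?_ ((continuous_snd.smul (hh'_cont.comp continuous_fst)).continuousOn)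
        exact (hdq.continuousOn.mono hIccsub).comp continuous_fst.continuousOn hfst
    obtain ⟨M₀, hM₀⟩ := hKc.exists_bound_of_continuousOn
      ((hL.continuous_fderiv (by norm_num)).continuousOn)
    have hM₀0 : 0 ≤ M₀ := le_trans (norm_nonneg _)
      (hM₀ _ ⟨(θ₁, 0), ⟨⟨le_rfl, h12.le⟩, by norm_num⟩, rfl⟩)
    obtain ⟨B, hB⟩ := isCompact_Icc.exists_bound_of_continuousOn
      (f := fun s => (((0:ℝ), h s, deriv h s) :
        ℝ × EuclideanSpace ℝ (Fin n) × EuclideanSpace ℝ (Fin n)))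
      (continuous_const.prodMk (hh_cont.prodMk hh'_cont)).continuousOn
    have hB0 : 0 ≤ B := le_trans (norm_nonneg _) (hB θ₁ ⟨le_rfl, h12.le⟩)
    obtain ⟨W, hW⟩ := isCompact_Icc.exists_bound_of_continuousOn
      (hwcd.continuousOn.mono hIccsub)
    have hW0 : 0 ≤ W := le_trans (norm_nonneg _) (hW θ₁ ⟨le_rfl, h12.le⟩)
    have h_bound : ∀ᵐ s ∂(volume : MeasureTheory.Measure ℝ), s ∈ Set.uIoc a t →
        ∀ ε' ∈ ball (0:ℝ) 1,
        ‖(fderiv ℝ L (s, q s + ε' • h s, deriv q s + ε' • deriv h s))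
            (0, h s, deriv h s) * (t - s) ^ (α - 1)‖ ≤ M₀ * B * W := by
      refine Filter.Eventually.of_forall (fun s hsI ε' hε' => ?_)
      by_cases hsup : s ∈ tsupport ⇑φ
      · have hsIcc : s ∈ Set.Icc θ₁ θ₂ := ⟨(hsupp hsup).1.le, (hsupp hsup).2.le⟩
        have hptK : ((s : ℝ), q s + ε' • h s, deriv q s + ε' • deriv h s) ∈
            (fun p : ℝ × ℝ =>
              ((p.1 : ℝ), q p.1 + p.2 • h p.1, deriv q p.1 + p.2 • deriv h p.1)) ''
            (Set.Icc θ₁ θ₂ ×ˢ Set.Icc (-1 : ℝ) 1) := by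
          refine ⟨(s, ε'), ⟨hsIcc, ?_⟩, rfl⟩
          have := mem_ball_zero_iff.mp hε'
          rw [Real.norm_eq_abs] at this
          exact ⟨by linarith [(abs_lt.mp this).1], by linarith [(abs_lt.mp this).2]⟩
        rw [norm_mul]
        have h1 : ‖(fderiv ℝ L (s, q s + ε' • h s, deriv q s + ε' • deriv h s))
            (0, h s, deriv h s)‖ ≤ M₀ * B :=
          le_trans (ContinuousLinearMap.le_opNorm _ _)
            (mul_le_mul (hM₀ _ hptK) (hB s hsIcc) (norm_nonneg _) hM₀0)
        have h2 : ‖(t - s) ^ (α - 1)‖ ≤ W := hW s hsIcc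
        exact mul_le_mul h1 h2 (norm_nonneg _) (by positivity)
      · have h1 : h s = 0 := hh_ts s hsup
        have h2 : deriv h s = 0 := hh_ts' s hsup
        have hz : (fderiv ℝ L (s, q s + ε' • h s, deriv q s + ε' • deriv h s))
            (0, h s, deriv h s) = 0 := by
          rw [h1, h2]
          have hz0 : (((0:ℝ), (0 : EuclideanSpace ℝ (Fin n)), (0 : EuclideanSpace ℝ (Fin n))) :
              ℝ × EuclideanSpace ℝ (Fin n) × EuclideanSpace ℝ (Fin n)) = 0 := rfl
          rw [hz0, map_zero]
        rw [hz, zero_mul, norm_zero]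
        positivity
    have h_diff : ∀ᵐ s ∂(volume : MeasureTheory.Measure ℝ), s ∈ Set.uIoc a t →
        ∀ ε' ∈ ball (0:ℝ) 1,
        HasDerivAt (fun ε => L (s, q s + ε • h s, deriv q s + ε • deriv h s) * (t - s) ^ (α - 1))
          ((fderiv ℝ L (s, q s + ε' • h s, deriv q s + ε' • deriv h s))
            (0, h s, deriv h s) * (t - s) ^ (α - 1)) ε' := by
      refine Filter.Eventually.of_forall (fun s _ ε' _ => ?_)
      have hc1 : HasDerivAt (fun ε : ℝ => q s + ε • h s) (h s) ε' := by
        simpa using ((hasDerivAt_id ε').smul_const (h s)).const_add (q s)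
      have hc2 : HasDerivAt (fun ε : ℝ => deriv q s + ε • deriv h s) (deriv h s) ε' := by
        simpa using ((hasDerivAt_id ε').smul_const (deriv h s)).const_add (deriv q s)
      have hc : HasDerivAt (fun ε : ℝ => ((s : ℝ), q s + ε • h s, deriv q s + ε • deriv h s))
          (((0 : ℝ), h s, deriv h s) :
            ℝ × EuclideanSpace ℝ (Fin n) × EuclideanSpace ℝ (Fin n)) ε' :=
        HasDerivAt.prodMk (hasDerivAt_const ε' s) (hc1.prodMk hc2)
      exact ((hLd _).hasFDerivAt.comp_hasDerivAt ε' hc).mul_const _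
    obtain ⟨hFI, hFD⟩ := intervalIntegral.hasDerivAt_integral_of_dominated_loc_of_deriv_le
      (F := fun ε s => L (s, q s + ε • h s, deriv q s + ε • deriv h s) * (t - s) ^ (α - 1))
      (F' := fun ε s => (fderiv ℝ L (s, q s + ε • h s, deriv q s + ε • deriv h s))
        (0, h s, deriv h s) * (t - s) ^ (α - 1))
      (x₀ := (0 : ℝ)) (bound := fun _ => M₀ * B * W)
      (ball_mem_nhds 0 one_pos) (Filter.Eventually.of_forall hFmeas) hFint hF'meas h_bound
      intervalIntegrable_const h_diff
    -- identify the derivative with 0 via hstat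
    have hst := hstat h hh2 ha0 ht0
    have hD2 := hFD.const_mul (1 / Real.Gamma α)
    have huniq := hD2.unique hst
    have hΓ : 0 < Real.Gamma α := Real.Gamma_pos_of_pos hα0
    have hI0 : (∫ s in a..t,
        (fderiv ℝ L (s, q s + (0:ℝ) • h s, deriv q s + (0:ℝ) • deriv h s))
          (0, h s, deriv h s) * (t - s) ^ (α - 1)) = 0 :=
      (mul_eq_zero.mp huniq).resolve_left (one_div_ne_zero (ne_of_gt hΓ))
    set Φ : ℝ → ℝ := fun s =>
      (fderiv ℝ L (s, q s + (0:ℝ) • h s, deriv q s + (0:ℝ) • deriv h s))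
        (0, h s, deriv h s) * (t - s) ^ (α - 1) with hΦ_def
    have hFI' : IntervalIntegrable Φ volume a t := hFI
    have hI0' : (∫ s in a..t, Φ s) = 0 := hI0
    have hΦvan : ∀ s, s ∉ tsupport ⇑φ → Φ s = 0 := by
      intro s hs
      rw [hΦ_def]
      simp only
      rw [hh_ts s hs, hh_ts' s hs]
      have hz0 : (((0:ℝ), (0 : EuclideanSpace ℝ (Fin n)), (0 : EuclideanSpace ℝ (Fin n))) :
          ℝ × EuclideanSpace ℝ (Fin n) × EuclideanSpace ℝ (Fin n)) = 0 := rfl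
      rw [hz0, map_zero, zero_mul]
    -- split the integral
    have hIm : ∀ x y : ℝ, a ≤ x → x ≤ y → y ≤ t → IntervalIntegrable Φ volume x y := by
      intro x y h1 h2 h3
      refine hFI'.mono_set ?_
      rw [Set.uIcc_of_le h2, Set.uIcc_of_le hat.le]
      exact Set.Icc_subset_Icc h1 h3
    have e1 : (∫ s in a..θ₁, Φ s) + (∫ s in θ₁..t, Φ s) = ∫ s in a..t, Φ s :=
      intervalIntegral.integral_add_adjacent_intervals
        (hIm a θ₁ le_rfl hθ₁.le (by linarith)) (hIm θ₁ t hθ₁.le (by linarith) le_rfl)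
    have e2 : (∫ s in θ₁..θ₂, Φ s) + (∫ s in θ₂..t, Φ s) = ∫ s in θ₁..t, Φ s :=
      intervalIntegral.integral_add_adjacent_intervals
        (hIm θ₁ θ₂ hθ₁.le h12.le hθ₂.le) (hIm θ₂ t (by linarith) hθ₂.le le_rfl)
    have z1 : (∫ s in a..θ₁, Φ s) = 0 := by
      rw [intervalIntegral.integral_congr (g := fun _ => (0:ℝ)) ?_, intervalIntegral.integral_zero]
      intro s hs
      rw [Set.uIcc_of_le hθ₁.le] at hs
      exact hΦvan s (fun hm => absurd (hsupp hm).1 (not_lt.mpr hs.2))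
    have z2 : (∫ s in θ₂..t, Φ s) = 0 := by
      rw [intervalIntegral.integral_congr (g := fun _ => (0:ℝ)) ?_, intervalIntegral.integral_zero]
      intro s hs
      rw [Set.uIcc_of_le hθ₂.le] at hs
      exact hΦvan s (fun hm => absurd (hsupp hm).2 (not_lt.mpr hs.1))
    have hmidI : (∫ s in θ₁..θ₂, Φ s) = 0 := by linarith
    -- integration by parts via FTC
    have hPcont : ContinuousOn P (Set.Icc θ₁ θ₂) := hPcd.continuousOn.mono hIccsub
    have hP'cont : ContinuousOn (deriv P) (Set.Icc θ₁ θ₂) :=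
      (hPcd.continuousOn_deriv_of_isOpen isOpen_Ioo le_rfl).mono hIccsub
    have hB'cont : ContinuousOn (fun s => ⟪P s, deriv h s⟫ + ⟪deriv P s, h s⟫)
        (Set.Icc θ₁ θ₂) :=
      (hPcont.inner (hh'_cont.continuousOn)).add (hP'cont.inner (hh_cont.continuousOn))
    have hB'int : IntervalIntegrable (fun s => ⟪P s, deriv h s⟫ + ⟪deriv P s, h s⟫)
        volume θ₁ θ₂ := by
      apply ContinuousOn.intervalIntegrable
      rwa [Set.uIcc_of_le h12.le]
    have hFTC : (∫ s in θ₁..θ₂, (⟪P s, deriv h s⟫ + ⟪deriv P s, h s⟫))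
        = ⟪P θ₂, h θ₂⟫ - ⟪P θ₁, h θ₁⟫ := by
      refine intervalIntegral.integral_eq_sub_of_hasDerivAt (f := fun s => ⟪P s, h s⟫) (fun s hs => ?_) hB'int
      rw [Set.uIcc_of_le h12.le] at hs
      have hd2 : HasDerivAt h (deriv h s) s := by rw [(hder s).deriv]; exact hder s
      exact (hPd s (hIccsub hs)).inner ℝ hd2
    have hhθ₁ : h θ₁ = 0 := hh_ts θ₁ (fun hm => lt_irrefl θ₁ (hsupp hm).1)
    have hhθ₂ : h θ₂ = 0 := hh_ts θ₂ (fun hm => lt_irrefl θ₂ (hsupp hm).2)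
    have hFTC0 : (∫ s in θ₁..θ₂, (⟪P s, deriv h s⟫ + ⟪deriv P s, h s⟫)) = 0 := by
      rw [hFTC, hhθ₁, hhθ₂, inner_zero_right, inner_zero_right, sub_zero]
    have hAint : IntervalIntegrable (fun s => φ s * ⟪G s, v⟫) volume θ₁ θ₂ := by
      apply ContinuousOn.intervalIntegrable
      rw [Set.uIcc_of_le h12.le]
      exact (φ.continuous.continuousOn).mul ((hGc.inner continuousOn_const).mono hIccsub)
    have hptwise : ∀ s : ℝ, Φ s =
        (φ s * ⟪G s, v⟫) + (⟪P s, deriv h s⟫ + ⟪deriv P s, h s⟫) := by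
      intro s
      have hΦs : Φ s = (⟪g₂ s, h s⟫ + ⟪g₃ s, deriv h s⟫) * w s := by
        rw [hΦ_def]
        simp only [zero_smul, add_zero]
        rw [falva_fderiv_split L (hLd _)]
      have hA : φ s * ⟪G s, v⟫ = ⟪G s, h s⟫ := by
        rw [hh_def]
        simp only
        rw [real_inner_smul_right]
      have hGs : ⟪G s, h s⟫ = w s * ⟪g₂ s, h s⟫ - ⟪deriv P s, h s⟫ := by
        have : G s = w s • g₂ s - deriv P s := rfl
        rw [this, inner_sub_left, real_inner_smul_left]
      have hPs : ⟪P s, deriv h s⟫ = w s * ⟪g₃ s, deriv h s⟫ := by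
        have : P s = w s • g₃ s := rfl
        rw [this, real_inner_smul_left]
      rw [hΦs, hA, hGs, hPs]
      ring
    have hsum : (∫ s in θ₁..θ₂, Φ s)
        = (∫ s in θ₁..θ₂, φ s * ⟪G s, v⟫)
          + (∫ s in θ₁..θ₂, (⟪P s, deriv h s⟫ + ⟪deriv P s, h s⟫)) := by
      rw [← intervalIntegral.integral_add hAint hB'int]
      exact intervalIntegral.integral_congr (fun s _ => hptwise s)
    rw [hmidI, hFTC0, add_zero] at hsum
    exact hsum.symm
  -- fundamental lemma: G θ₀ = 0
  have hG0 : G θ₀ = 0 := by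
    by_contra hne
    set v := G θ₀ with hv_def
    have hv : 0 < ⟪G θ₀, v⟫ := by
      have := real_inner_self_eq_norm_sq v
      rw [hv_def] at this ⊢
      rw [this]
      have : 0 < ‖v‖ := norm_pos_iff.mpr hne
      rw [hv_def] at this
      positivity
    have hGv : ContinuousOn (fun s => ⟪G s, v⟫) (Set.Ioo a t) := hGc.inner continuousOn_const
    have hca : ContinuousAt (fun s => ⟪G s, v⟫) θ₀ := hGv.continuousAt (isOpen_Ioo.mem_nhds hθ₀)
    have hmem : {s : ℝ | 0 < ⟪G s, v⟫} ∩ Set.Ioo a t ∈ nhds θ₀ :=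
      Filter.inter_mem (hca (Ioi_mem_nhds hv)) (isOpen_Ioo.mem_nhds hθ₀)
    obtain ⟨δ, hδ, hballsub⟩ := Metric.mem_nhds_iff.mp hmem
    set θ₁ := θ₀ - δ/2 with hθ₁_def
    set θ₂ := θ₀ + δ/2 with hθ₂_def
    have hsub2 : Set.Icc θ₁ θ₂ ⊆ ball θ₀ δ := by
      intro s hs
      rw [mem_ball, Real.dist_eq]
      rw [Set.mem_Icc, hθ₁_def, hθ₂_def] at hs
      rw [abs_lt]; constructor <;> [linarith [hs.1]; linarith [hs.2]]
    have hθ₁Ioo : θ₁ ∈ Set.Ioo a t :=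
      (hballsub (hsub2 ⟨le_refl _, by rw [hθ₁_def, hθ₂_def]; linarith⟩)).2
    have hθ₂Ioo : θ₂ ∈ Set.Ioo a t :=
      (hballsub (hsub2 ⟨by rw [hθ₁_def, hθ₂_def]; linarith, le_refl _⟩)).2
    set φ : ContDiffBump θ₀ := ⟨δ/8, δ/4, by positivity, by linarith⟩ with hφ_def
    have hts : tsupport ⇑φ ⊆ Set.Ioo θ₁ θ₂ := by
      rw [ContDiffBump.tsupport_eq]
      intro s hs
      rw [mem_closedBall, Real.dist_eq] at hs
      have hs4 : |s - θ₀| ≤ δ/4 := hs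
      have := abs_le.mp hs4
      constructor
      · rw [hθ₁_def]; linarith [this.1]
      · rw [hθ₂_def]; linarith [this.2]
    have h0 := hkey θ₁ θ₂ hθ₁Ioo.1 (by rw [hθ₁_def, hθ₂_def]; linarith) hθ₂Ioo.2 φ hts v
    set f := fun s => φ s * ⟪G s, v⟫ with hf_def
    have hpos_on : ∀ s ∈ Set.Icc θ₁ θ₂, 0 ≤ f s := by
      intro s hs
      rcases eq_or_lt_of_le (φ.nonneg (x := s)) with hz|hz
      · simp [hf_def, ← hz]
      · exact le_of_lt (mul_pos hz (hballsub (hsub2 hs)).1)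
    have hf_cont : ContinuousOn f (Set.Icc θ₁ θ₂) :=
      (φ.continuous.continuousOn).mul
        (hGv.mono (fun s hs => (hballsub (hsub2 hs)).2))
    have hci : ∀ x y, θ₁ ≤ x → x ≤ y → y ≤ θ₂ → IntervalIntegrable f volume x y := by
      intro x y h1 h2 h3
      exact (hf_cont.mono (by rw [Set.uIcc_of_le h2]; exact Set.Icc_subset_Icc h1 h3)).intervalIntegrable
    set c := θ₀ - δ/8 with hc_def
    set d := θ₀ + δ/8 with hd_def
    have hb1 : θ₁ ≤ c := by rw [hθ₁_def, hc_def]; linarith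
    have hb2 : c ≤ d := by rw [hc_def, hd_def]; linarith
    have hb3 : d ≤ θ₂ := by rw [hd_def, hθ₂_def]; linarith
    have e1 : (∫ s in θ₁..c, f s) + (∫ s in c..d, f s) = ∫ s in θ₁..d, f s :=
      intervalIntegral.integral_add_adjacent_intervals
        (hci θ₁ c le_rfl hb1 (le_trans hb2 hb3)) (hci c d hb1 hb2 hb3)
    have e2 : (∫ s in θ₁..d, f s) + (∫ s in d..θ₂, f s) = ∫ s in θ₁..θ₂, f s :=
      intervalIntegral.integral_add_adjacent_intervals
        (hci θ₁ d le_rfl (le_trans hb1 hb2) hb3) (hci d θ₂ (le_trans hb1 hb2) hb3 le_rfl)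
    have hmid : 0 < ∫ s in c..d, f s := by
      apply intervalIntegral.intervalIntegral_pos_of_pos_on (hci c d hb1 hb2 hb3)
      · intro x hx
        have hx1 : x ∈ closedBall θ₀ φ.rIn := by
          show dist x θ₀ ≤ δ/8
          rw [Real.dist_eq, abs_le]
          rw [Set.mem_Ioo, hc_def, hd_def] at hx
          constructor <;> [linarith [hx.1]; linarith [hx.2]]
        have h1 : φ x = 1 := φ.one_of_mem_closedBall hx1
        have hxI : x ∈ Set.Icc θ₁ θ₂ := by
          rw [Set.mem_Ioo] at hx
          exact ⟨le_trans hb1 (le_of_lt hx.1), le_trans (le_of_lt hx.2) hb3⟩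
        have h2 : 0 < ⟪G x, v⟫ := (hballsub (hsub2 hxI)).1
        rw [hf_def]; simp only [h1, one_mul]; exact h2
      · rw [hc_def, hd_def]; linarith
    have houter1 : 0 ≤ ∫ s in θ₁..c, f s :=
      intervalIntegral.integral_nonneg hb1
        (fun u hu => hpos_on u ⟨hu.1, le_trans hu.2 (le_trans hb2 hb3)⟩)
    have houter2 : 0 ≤ ∫ s in d..θ₂, f s :=
      intervalIntegral.integral_nonneg hb3
        (fun u hu => hpos_on u ⟨le_trans (le_trans hb1 hb2) hu.1, hu.2⟩)
    have : 0 < ∫ s in θ₁..θ₂, f s := by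
      rw [← e2, ← e1]; linarith
    rw [hf_def] at this
    exact absurd h0 (ne_of_gt this)
  -- final algebra
  have htp : 0 < t - θ₀ := sub_pos.mpr hθ₀.2
  have hwpos : 0 < w θ₀ := Real.rpow_pos_of_pos htp _
  have hsub : w θ₀ • g₂ θ₀ - deriv P θ₀ = 0 := hG0
  have hPd' := hPderiv θ₀ hθ₀
  have hrw : (1 - α) * (t - θ₀) ^ (α - 2) = (1 - α) / (t - θ₀) * w θ₀ := by
    have h1 : (t - θ₀) ^ (α - 2) = (t - θ₀) ^ (α - 1) / (t - θ₀) := by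
      rw [show α - 2 = (α - 1) - 1 by ring, Real.rpow_sub htp, Real.rpow_one]
    have h2 : w θ₀ = (t - θ₀) ^ (α - 1) := rfl
    rw [h1, h2]; ring
  show g₂ θ₀ - deriv g₃ θ₀ = ((1 - α) / (t - θ₀)) • g₃ θ₀
  have hmain : w θ₀ • (g₂ θ₀ - deriv g₃ θ₀) = w θ₀ • (((1 - α) / (t - θ₀)) • g₃ θ₀) := by
    calc w θ₀ • (g₂ θ₀ - deriv g₃ θ₀)
        = w θ₀ • g₂ θ₀ - w θ₀ • deriv g₃ θ₀ := smul_sub _ _ _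
      _ = (w θ₀ • deriv g₃ θ₀ + ((1 - α) * (t - θ₀) ^ (α - 2)) • g₃ θ₀)
            - w θ₀ • deriv g₃ θ₀ := by rw [sub_eq_zero.mp hsub, hPd']
      _ = ((1 - α) * (t - θ₀) ^ (α - 2)) • g₃ θ₀ := add_sub_cancel_left _ _
      _ = w θ₀ • (((1 - α) / (t - θ₀)) • g₃ θ₀) := by
          rw [hrw, smul_smul, mul_comm]
  exact smul_right_injective _ (ne_of_gt hwpos) hmain
end

section
/- Let n ≥ 1, let a < t be real numbers, let 0 < α ≤ 1, let L : ℝ × ℝⁿ × ℝⁿ → ℝ be of class C², and let q : ℝ → ℝⁿ be of class C² on [a,t]. Then for every C² function h : ℝ → ℝⁿ with h(a) = 0 and h(t) = 0, the derivative at ε = 0 of ε ↦ (1/Γ(α)) ∫_a^t L(θ, q(θ) + ε·h(θ), q'(θ) + ε·h'(θ)) (t−θ)^{α−1} dθ equals (1/Γ(α)) ∫_a^t ⟨ ∂₂L(θ, q(θ), q'(θ)) − (d/dθ)[∂₃L(θ, q(θ), q'(θ))] − ((1−α)/(t−θ)) ∂₃L(θ, q(θ), q'(θ)), h(θ) ⟩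 (t−θ)^{α−1} dθ. -/
open MeasureTheory Set InnerProductSpace intervalIntegral
open scoped RealInnerProductSpace

lemma falva_aux_w_int {a t α : ℝ} (hα0 : 0 < α) :
    IntervalIntegrable (fun θ => (t - θ) ^ (α - 1)) volume a t := by
  have h : IntervalIntegrable (fun x : ℝ => x ^ (α - 1)) volume (t - a) (t - t) :=
    (intervalIntegral.intervalIntegrable_rpow' (by linarith)).symm
  simpa using h.comp_sub_left t

lemma falva_aux_II {a t α : ℝ} {f : ℝ → ℝ} (hat : a < t) (hα0 : 0 < α)
    (hf : ContinuousOn f (Set.Ioo a t)) {C : ℝ}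
    (hb : ∀ θ ∈ Set.Ioo a t, ‖f θ‖ ≤ C * (t - θ) ^ (α - 1)) :
    IntervalIntegrable f volume a t := by
  have hw := (falva_aux_w_int (a := a) (t := t) hα0).const_mul C
  rw [intervalIntegrable_iff, uIoc_of_le hat.le] at hw ⊢
  rw [integrableOn_Ioc_iff_integrableOn_Ioo] at hw ⊢
  refine Integrable.mono' hw (hf.aestronglyMeasurable measurableSet_Ioo) ?_
  rw [ae_restrict_iff' measurableSet_Ioo]
  exact Filter.Eventually.of_forall hb

lemma falva_aux_ae {a t : ℝ} (hat : a < t) {P : ℝ → Prop}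
    (hP : ∀ θ ∈ Set.Ioo a t, P θ) :
    ∀ᵐ θ ∂(volume : Measure ℝ), θ ∈ Set.uIoc a t → P θ := by
  have h1 : ∀ᵐ (x : ℝ) ∂volume, x ∉ ({t} : Set ℝ) := by
    rw [← measure_eq_zero_iff_ae_notMem]; exact measure_singleton t
  filter_upwards [h1] with θ hθ hmem
  rw [uIoc_of_le hat.le] at hmem
  exact hP θ ⟨hmem.1, lt_of_le_of_ne hmem.2 (by simpa using hθ)⟩

set_option maxHeartbeats 1000000 in
lemma falva_ibp {E : Type*} [NormedAddCommGroup E] [InnerProductSpace ℝ E]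
    {a t α : ℝ} (hat : a < t) (hα0 : 0 < α) (hα1 : α ≤ 1)
    (G G' h : ℝ → E)
    (hGc : ContinuousOn G (Icc a t)) (hG'c : ContinuousOn G' (Icc a t))
    (hGd : ∀ θ ∈ Ioo a t, HasDerivAt G (G' θ) θ)
    (hh : ContDiff ℝ 2 h) (h0a : h a = 0) (h0t : h t = 0) :
    ∫ θ in a..t, (inner (𝕜 := ℝ) (G θ) (deriv h θ)) * (t - θ) ^ (α - 1)
      = -(∫ θ in a..t, (inner (𝕜 := ℝ) (G' θ) (h θ)) * (t - θ) ^ (α - 1))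
        - ∫ θ in a..t, ((1 - α) / (t - θ)) * (inner (𝕜 := ℝ) (G θ) (h θ)) * (t - θ) ^ (α - 1) := by
  have hamem : a ∈ Icc a t := left_mem_Icc.mpr hat.le
  have htmem : t ∈ Icc a t := right_mem_Icc.mpr hat.le
  have hwnn : ∀ θ ∈ Icc a t, (0:ℝ) ≤ (t - θ) ^ (α - 1) :=
    fun θ hθ => Real.rpow_nonneg (by linarith [hθ.2]) _
  obtain ⟨CG, hCG⟩ := isCompact_Icc.exists_bound_of_continuousOn hGc
  obtain ⟨CG', hCG'⟩ := isCompact_Icc.exists_bound_of_continuousOn hG'c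
  obtain ⟨Ch0, hCh0⟩ := isCompact_Icc.exists_bound_of_continuousOn hh.continuous.continuousOn
  obtain ⟨Ch1, hCh1⟩ := isCompact_Icc.exists_bound_of_continuousOn
    (hh.continuous_deriv one_le_two).continuousOn
  have hCG0 : 0 ≤ CG := le_trans (norm_nonneg _) (hCG a hamem)
  have hCG'0 : 0 ≤ CG' := le_trans (norm_nonneg _) (hCG' a hamem)
  have hCh00 : 0 ≤ Ch0 := le_trans (norm_nonneg _) (hCh0 a hamem)
  have hCh10 : 0 ≤ Ch1 := le_trans (norm_nonneg _) (hCh1 a hamem)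
  have hhd : ∀ x : ℝ, HasDerivAt h (deriv h x) x := fun x =>
    (hh.differentiable two_ne_zero).differentiableAt.hasDerivAt
  have hlin : ∀ θ ∈ Icc a t, ‖h θ‖ ≤ Ch1 * (t - θ) := by
    intro θ hθ
    have := (convex_Icc a t).norm_image_sub_le_of_norm_hasDerivWithin_le
      (fun x _ => (hhd x).hasDerivWithinAt) hCh1 htmem hθ
    rw [h0t, sub_zero] at this
    calc ‖h θ‖ ≤ Ch1 * ‖θ - t‖ := this
    _ = Ch1 * (t - θ) := by
      rw [Real.norm_eq_abs, abs_sub_comm, abs_of_nonneg (by linarith [hθ.2])]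
  -- the function to which we apply FTC, and its derivative
  set Φ : ℝ → ℝ := fun θ => (inner (𝕜 := ℝ) (G θ) (h θ)) * (t - θ) ^ (α - 1) with hΦ
  set Φ' : ℝ → ℝ := fun θ =>
    ((inner (𝕜 := ℝ) (G θ) (deriv h θ)) + (inner (𝕜 := ℝ) (G' θ) (h θ))) * (t - θ) ^ (α - 1)
      + (inner (𝕜 := ℝ) (G θ) (h θ)) * ((α - 1) * (t - θ) ^ (α - 1 - 1) * (-1)) with hΦ'
  have hΦd : ∀ θ ∈ Ioo a t, HasDerivAt Φ (Φ' θ) θ := by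
    intro θ hθ
    have h1 : HasDerivAt (fun x : ℝ => t - x) (-1) θ := by
      simpa using (hasDerivAt_id θ).const_sub t
    have h2 : HasDerivAt (fun x : ℝ => (t - x) ^ (α - 1))
        ((α - 1) * (t - θ) ^ (α - 1 - 1) * (-1)) θ :=
      (Real.hasDerivAt_rpow_const (x := t - θ) (p := α - 1)
        (Or.inl (ne_of_gt (by linarith [hθ.2])))).comp θ h1
    exact ((hGd θ hθ).inner ℝ (hhd θ)).mul h2
  -- continuity of Φ on [a, t]
  have hΦc : ContinuousOn Φ (Icc a t) := by
    intro x hx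
    rcases eq_or_lt_of_le hx.2 with hxt | hxt
    · -- x = t : continuity via squeeze
      have hΦt : Φ t = 0 := by rw [hΦ]; simp [h0t]
      rw [hxt]
      unfold ContinuousWithinAt
      rw [hΦt]
      have hb : ∀ θ ∈ Icc a t, ‖Φ θ‖ ≤ (CG * Ch1) * (t - θ) ^ α := by
        intro θ hθ
        have hxx : (t - θ) * (t - θ) ^ (α - 1) = (t - θ) ^ α := by
          rcases eq_or_lt_of_le (sub_nonneg.mpr hθ.2) with h0 | h0
          · rw [← h0]; simp [Real.zero_rpow (ne_of_gt hα0)]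
          · rw [mul_comm, ← Real.rpow_add_one (ne_of_gt h0)]
            norm_num
        have h1 : ‖Φ θ‖ ≤ ‖inner (𝕜 := ℝ) (G θ) (h θ)‖ * (t - θ) ^ (α - 1) := by
          rw [hΦ]
          simp only [norm_mul]
          rw [Real.norm_eq_abs ((t - θ) ^ (α - 1)), abs_of_nonneg (hwnn θ hθ)]
        have h2 : ‖inner (𝕜 := ℝ) (G θ) (h θ)‖ ≤ CG * (Ch1 * (t - θ)) := by
          calc ‖inner (𝕜 := ℝ) (G θ) (h θ)‖ ≤ ‖G θ‖ * ‖h θ‖ := norm_inner_le_norm _ _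
          _ ≤ CG * (Ch1 * (t - θ)) := by
            apply mul_le_mul (hCG θ hθ) (hlin θ hθ) (norm_nonneg _) hCG0
        calc ‖Φ θ‖ ≤ (CG * (Ch1 * (t - θ))) * (t - θ) ^ (α - 1) := by
              refine le_trans h1 (mul_le_mul_of_nonneg_right h2 (hwnn θ hθ))
        _ = (CG * Ch1) * ((t - θ) * (t - θ) ^ (α - 1)) := by ring
        _ = (CG * Ch1) * (t - θ) ^ α := by rw [hxx]
      have hlim : Filter.Tendsto (fun θ : ℝ => (CG * Ch1) * (t - θ) ^ α)
          (nhdsWithin t (Icc a t)) (nhds 0) := by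
        have hc : ContinuousWithinAt (fun θ : ℝ => (CG * Ch1) * (t - θ) ^ α) (Icc a t) t := by
          apply ContinuousWithinAt.mul continuousWithinAt_const
          apply ContinuousWithinAt.rpow_const
          · exact (continuous_const.sub continuous_id).continuousWithinAt
          · exact Or.inr hα0.le
        have hc2 := hc.tendsto
        simp only [sub_self, Real.zero_rpow (ne_of_gt hα0), mul_zero] at hc2
        exact hc2
      apply squeeze_zero_norm' ?_ hlim
      filter_upwards [self_mem_nhdsWithin] with θ hθ
      exact hb θ hθ
    · -- x < t : Φ is continuous within at x
      apply ContinuousWithinAt.mul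
      · exact ((hGc x hx).inner (hh.continuous.continuousOn x hx))
      · apply ContinuousWithinAt.rpow_const
        · exact (continuous_const.sub continuous_id).continuousWithinAt
        · exact Or.inl (ne_of_gt (by linarith))
  -- integrability of Φ'
  have hwcont : ContinuousOn (fun θ : ℝ => (t - θ) ^ (α - 1)) (Ioo a t) := by
    apply ContinuousOn.rpow_const (continuous_const.sub continuous_id).continuousOn
    exact fun x hx => Or.inl (ne_of_gt (sub_pos.mpr hx.2))
  have hw2cont : ContinuousOn (fun θ : ℝ => (t - θ) ^ (α - 1 - 1)) (Ioo a t) := by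
    apply ContinuousOn.rpow_const (continuous_const.sub continuous_id).continuousOn
    exact fun x hx => Or.inl (ne_of_gt (sub_pos.mpr hx.2))
  have hGIoo : ContinuousOn G (Ioo a t) := hGc.mono Ioo_subset_Icc_self
  have hG'Ioo : ContinuousOn G' (Ioo a t) := hG'c.mono Ioo_subset_Icc_self
  have hhIoo : ContinuousOn h (Ioo a t) := hh.continuous.continuousOn
  have hh'Ioo : ContinuousOn (deriv h) (Ioo a t) := (hh.continuous_deriv one_le_two).continuousOn
  have hrpow_id : ∀ θ ∈ Ioo a t, (t - θ) * (t - θ) ^ (α - 1 - 1) = (t - θ) ^ (α - 1) := by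
    intro θ hθ
    have h0 : (0:ℝ) < t - θ := by linarith [hθ.2]
    rw [mul_comm, ← Real.rpow_add_one (ne_of_gt h0)]
    norm_num
  have hΦ'int : IntervalIntegrable Φ' volume a t := by
    apply falva_aux_II hat hα0 (C := CG * Ch1 + CG' * Ch0 + (1 - α) * (CG * Ch1))
    · rw [hΦ']
      apply ContinuousOn.add
      · exact ((hGIoo.inner hh'Ioo).add (hG'Ioo.inner hhIoo)).mul hwcont
      · exact (hGIoo.inner hhIoo).mul
          ((continuousOn_const.mul hw2cont).mul continuousOn_const)
    · intro θ hθ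
      have hθ' := Ioo_subset_Icc_self hθ
      have h0 : (0:ℝ) < t - θ := by linarith [hθ.2]
      have hwnn' := hwnn θ hθ'
      have hw2nn : (0:ℝ) ≤ (t - θ) ^ (α - 1 - 1) := Real.rpow_nonneg h0.le _
      rw [hΦ']
      have e1 : ‖((inner (𝕜 := ℝ) (G θ) (deriv h θ)) + (inner (𝕜 := ℝ) (G' θ) (h θ)))
          * (t - θ) ^ (α - 1)‖ ≤ (CG * Ch1 + CG' * Ch0) * (t - θ) ^ (α - 1) := by
        rw [norm_mul, Real.norm_eq_abs ((t - θ) ^ (α - 1)), abs_of_nonneg hwnn']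
        apply mul_le_mul_of_nonneg_right ?_ hwnn'
        calc ‖(inner (𝕜 := ℝ) (G θ) (deriv h θ)) + (inner (𝕜 := ℝ) (G' θ) (h θ))‖
            ≤ ‖inner (𝕜 := ℝ) (G θ) (deriv h θ)‖ + ‖inner (𝕜 := ℝ) (G' θ) (h θ)‖ :=
              norm_add_le _ _
        _ ≤ CG * Ch1 + CG' * Ch0 := by
          have i1 : ‖inner (𝕜 := ℝ) (G θ) (deriv h θ)‖ ≤ ‖G θ‖ * ‖deriv h θ‖ :=
            norm_inner_le_norm _ _
          have i2 : ‖inner (𝕜 := ℝ) (G' θ) (h θ)‖ ≤ ‖G' θ‖ * ‖h θ‖ := norm_inner_le_norm _ _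
          have := hCG θ hθ'; have := hCh1 θ hθ'; have := hCG' θ hθ'; have := hCh0 θ hθ'
          have := norm_nonneg (G θ); have := norm_nonneg (G' θ)
          have := norm_nonneg (h θ); have := norm_nonneg (deriv h θ)
          nlinarith
      have e2 : ‖(inner (𝕜 := ℝ) (G θ) (h θ)) * ((α - 1) * (t - θ) ^ (α - 1 - 1) * (-1))‖
          ≤ (1 - α) * (CG * Ch1) * (t - θ) ^ (α - 1) := by
        have i1 : ‖inner (𝕜 := ℝ) (G θ) (h θ)‖ ≤ CG * (Ch1 * (t - θ)) := by
          calc ‖inner (𝕜 := ℝ) (G θ) (h θ)‖ ≤ ‖G θ‖ * ‖h θ‖ := norm_inner_le_norm _ _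
          _ ≤ CG * (Ch1 * (t - θ)) :=
            mul_le_mul (hCG θ hθ') (hlin θ hθ') (norm_nonneg _) hCG0
        rw [norm_mul]
        have habs : ‖(α - 1) * (t - θ) ^ (α - 1 - 1) * (-1)‖
            = (1 - α) * (t - θ) ^ (α - 1 - 1) := by
          rw [Real.norm_eq_abs, abs_mul, abs_mul, abs_neg, abs_one, mul_one,
            abs_of_nonpos (by linarith : α - 1 ≤ 0),
            abs_of_nonneg hw2nn, neg_sub]
        rw [habs]
        calc ‖inner (𝕜 := ℝ) (G θ) (h θ)‖ * ((1 - α) * (t - θ) ^ (α - 1 - 1))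
            ≤ (CG * (Ch1 * (t - θ))) * ((1 - α) * (t - θ) ^ (α - 1 - 1)) := by
              apply mul_le_mul_of_nonneg_right i1
              exact mul_nonneg (by linarith) hw2nn
        _ = (1 - α) * (CG * Ch1) * ((t - θ) * (t - θ) ^ (α - 1 - 1)) := by ring
        _ = (1 - α) * (CG * Ch1) * (t - θ) ^ (α - 1) := by rw [hrpow_id θ hθ]
      calc ‖Φ' θ‖ ≤ _ := norm_add_le _ _
      _ ≤ (CG * Ch1 + CG' * Ch0) * (t - θ) ^ (α - 1)
          + (1 - α) * (CG * Ch1) * (t - θ) ^ (α - 1) := add_le_add e1 e2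
      _ = (CG * Ch1 + CG' * Ch0 + (1 - α) * (CG * Ch1)) * (t - θ) ^ (α - 1) := by ring
  -- FTC
  have hFTC : ∫ θ in a..t, Φ' θ = 0 := by
    rw [intervalIntegral.integral_eq_sub_of_hasDerivAt_of_le hat.le hΦc hΦd hΦ'int]
    rw [hΦ]
    simp [h0a, h0t]
  -- split Φ' into the three pieces
  -- integrability of the three pieces
  have hBint : IntervalIntegrable
      (fun θ => (inner (𝕜 := ℝ) (G θ) (deriv h θ)) * (t - θ) ^ (α - 1)) volume a t := by
    apply falva_aux_II hat hα0 ((hGIoo.inner hh'Ioo).mul hwcont) (C := CG * Ch1)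
    intro θ hθ
    have hθ' := Ioo_subset_Icc_self hθ
    rw [Pi.mul_apply, norm_mul, Real.norm_eq_abs ((t - θ) ^ (α - 1)), abs_of_nonneg (hwnn θ hθ')]
    apply mul_le_mul_of_nonneg_right ?_ (hwnn θ hθ')
    calc ‖inner (𝕜 := ℝ) (G θ) (deriv h θ)‖ ≤ ‖G θ‖ * ‖deriv h θ‖ := norm_inner_le_norm _ _
    _ ≤ CG * Ch1 := mul_le_mul (hCG θ hθ') (hCh1 θ hθ') (norm_nonneg _) hCG0
  have hCint : IntervalIntegrable
      (fun θ => (inner (𝕜 := ℝ) (G' θ) (h θ)) * (t - θ) ^ (α - 1)) volume a t := by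
    apply falva_aux_II hat hα0 ((hG'Ioo.inner hhIoo).mul hwcont) (C := CG' * Ch0)
    intro θ hθ
    have hθ' := Ioo_subset_Icc_self hθ
    rw [Pi.mul_apply, norm_mul, Real.norm_eq_abs ((t - θ) ^ (α - 1)), abs_of_nonneg (hwnn θ hθ')]
    apply mul_le_mul_of_nonneg_right ?_ (hwnn θ hθ')
    calc ‖inner (𝕜 := ℝ) (G' θ) (h θ)‖ ≤ ‖G' θ‖ * ‖h θ‖ := norm_inner_le_norm _ _
    _ ≤ CG' * Ch0 := mul_le_mul (hCG' θ hθ') (hCh0 θ hθ') (norm_nonneg _) hCG'0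
  have hDint : IntervalIntegrable
      (fun θ => ((1 - α) / (t - θ)) * (inner (𝕜 := ℝ) (G θ) (h θ)) * (t - θ) ^ (α - 1))
      volume a t := by
    apply falva_aux_II hat hα0 ?_ (C := (1 - α) * (CG * Ch1))
    · intro θ hθ
      have hθ' := Ioo_subset_Icc_self hθ
      have h0 : (0:ℝ) < t - θ := sub_pos.mpr hθ.2
      rw [norm_mul, norm_mul, Real.norm_eq_abs ((t - θ) ^ (α - 1)),
        abs_of_nonneg (hwnn θ hθ'), Real.norm_eq_abs ((1 - α) / (t - θ)),
        abs_of_nonneg (div_nonneg (by linarith) h0.le)]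
      apply mul_le_mul_of_nonneg_right ?_ (hwnn θ hθ')
      have i1 : ‖inner (𝕜 := ℝ) (G θ) (h θ)‖ ≤ CG * (Ch1 * (t - θ)) := by
        calc ‖inner (𝕜 := ℝ) (G θ) (h θ)‖ ≤ ‖G θ‖ * ‖h θ‖ := norm_inner_le_norm _ _
        _ ≤ CG * (Ch1 * (t - θ)) := mul_le_mul (hCG θ hθ') (hlin θ hθ') (norm_nonneg _) hCG0
      calc (1 - α) / (t - θ) * ‖inner (𝕜 := ℝ) (G θ) (h θ)‖
          ≤ (1 - α) / (t - θ) * (CG * (Ch1 * (t - θ))) := by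
            apply mul_le_mul_of_nonneg_left i1 (div_nonneg (by linarith) h0.le)
      _ = (1 - α) * (CG * Ch1) := by field_simp
    · apply ContinuousOn.mul ?_ hwcont
      apply ContinuousOn.mul ?_ (hGIoo.inner hhIoo)
      apply ContinuousOn.div continuousOn_const (continuous_const.sub continuous_id).continuousOn
      exact fun x hx => ne_of_gt (sub_pos.mpr hx.2)
  -- pointwise identity on Ioo
  have hpt : ∀ θ ∈ Ioo a t, Φ' θ =
      (inner (𝕜 := ℝ) (G θ) (deriv h θ)) * (t - θ) ^ (α - 1)
      + (inner (𝕜 := ℝ) (G' θ) (h θ)) * (t - θ) ^ (α - 1)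
      + ((1 - α) / (t - θ)) * (inner (𝕜 := ℝ) (G θ) (h θ)) * (t - θ) ^ (α - 1) := by
    intro θ hθ
    have h0 : (0:ℝ) < t - θ := sub_pos.mpr hθ.2
    have hsub : (t - θ) ^ (α - 1 - 1) = (t - θ) ^ (α - 1) / (t - θ) :=
      Real.rpow_sub_one (ne_of_gt h0) _
    rw [hΦ']
    simp only
    rw [hsub]
    field_simp
    ring
  have hsplit : ∫ θ in a..t, Φ' θ =
      (∫ θ in a..t, (inner (𝕜 := ℝ) (G θ) (deriv h θ)) * (t - θ) ^ (α - 1))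
      + (∫ θ in a..t, (inner (𝕜 := ℝ) (G' θ) (h θ)) * (t - θ) ^ (α - 1))
      + ∫ θ in a..t, ((1 - α) / (t - θ)) * (inner (𝕜 := ℝ) (G θ) (h θ)) * (t - θ) ^ (α - 1) := by
    rw [← intervalIntegral.integral_add hBint hCint,
      ← intervalIntegral.integral_add (hBint.add hCint) hDint]
    apply intervalIntegral.integral_congr_ae
    apply falva_aux_ae hat
    intro θ hθ
    exact hpt θ hθ
  rw [hFTC] at hsplit
  linarith [hsplit]


lemma falva_aux_inner_bound {E : Type*} [NormedAddCommGroup E] [InnerProductSpace ℝ E]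
    (p2 p3 x y : E) {C2 C3 cx cy : ℝ} (h2 : ‖p2‖ ≤ C2) (h3 : ‖p3‖ ≤ C3)
    (hx : ‖x‖ ≤ cx) (hy : ‖y‖ ≤ cy) (hcx : 0 ≤ cx) (hcy : 0 ≤ cy) :
    ‖inner (𝕜 := ℝ) p2 x + inner (𝕜 := ℝ) p3 y‖ ≤ C2 * cx + C3 * cy := by
  have i2 := norm_inner_le_norm (𝕜 := ℝ) p2 x
  have i3 := norm_inner_le_norm (𝕜 := ℝ) p3 y
  have := norm_add_le (inner (𝕜 := ℝ) p2 x) (inner (𝕜 := ℝ) p3 y)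
  have n2 := norm_nonneg p2
  have n3 := norm_nonneg p3
  have nx := norm_nonneg x
  have ny := norm_nonneg y
  nlinarith

set_option maxHeartbeats 2000000
/-- **First variation of the first-order FALVA functional.**
For every `C²` variation `h` vanishing at `a` and `t`, the derivative at `ε = 0`
of `ε ↦ (1/Γ(α)) ∫_a^t L(θ, q+εh, q'+εh') (t-θ)^(α-1) dθ` equals
`(1/Γ(α)) ∫_a^t ⟨∂₂L - d/dθ ∂₃L - ((1-α)/(t-θ)) ∂₃L, h(θ)⟩ (t-θ)^(α-1) dθ`. -/
theorem falva_first_order_first_variation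
    (n : ℕ) (hn : 1 ≤ n) (a t α : ℝ) (hat : a < t) (hα0 : 0 < α) (hα1 : α ≤ 1)
    (L : ℝ × EuclideanSpace ℝ (Fin n) × EuclideanSpace ℝ (Fin n) → ℝ)
    (hL : ContDiff ℝ 2 L)
    (q : ℝ → EuclideanSpace ℝ (Fin n))
    (hq : ContDiffOn ℝ 2 q (Set.Icc a t)) :
    ∀ h : ℝ → EuclideanSpace ℝ (Fin n),
      ContDiff ℝ 2 h → h a = 0 → h t = 0 →
      HasDerivAt (fun ε : ℝ => (1 / Real.Gamma α) *
          ∫ θ in a..t,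
            L (θ, q θ + ε • h θ, deriv q θ + ε • deriv h θ) * (t - θ) ^ (α - 1))
        ((1 / Real.Gamma α) *
          ∫ θ in a..t,
            ⟪gradient (fun y => L (θ, y, deriv q θ)) (q θ)
                - deriv (fun s => gradient (fun v => L (s, q s, v)) (deriv q s)) θ
                - ((1 - α) / (t - θ)) • gradient (fun v => L (θ, q θ, v)) (deriv q θ),
              h θ⟫ * (t - θ) ^ (α - 1))
        0 := by
  intro h hh h0a h0t
  have hudiff : UniqueDiffOn ℝ (Set.Icc a t) := uniqueDiffOn_Icc hat
  -- the weight function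
  set w : ℝ → ℝ := fun θ => (t - θ) ^ (α - 1) with hw
  have hwnn : ∀ θ ∈ Icc a t, 0 ≤ w θ := fun θ hθ => Real.rpow_nonneg (by linarith [hθ.2]) _
  have hwcont : ContinuousOn w (Ioo a t) := by
    apply ContinuousOn.rpow_const
    · exact (continuous_const.sub continuous_id).continuousOn
    · intro x hx; exact Or.inl (by simp; intro hc; linarith [hx.2])
  -- derivatives of q
  set u : ℝ → EuclideanSpace ℝ (Fin n) := derivWithin q (Icc a t) with hu
  have hqc : ContinuousOn q (Icc a t) := hq.continuousOn
  have hu1 : ContDiffOn ℝ 1 u (Icc a t) := hq.derivWithin hudiff (by norm_num)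
  have huc : ContinuousOn u (Icc a t) := hu1.continuousOn
  have hqd : ∀ θ ∈ Ioo a t, HasDerivAt q (u θ) θ := by
    intro θ hθ
    have hmem : Icc a t ∈ nhds θ := Icc_mem_nhds hθ.1 hθ.2
    have hd : DifferentiableAt ℝ q θ :=
      ((hq.differentiableOn two_ne_zero) θ (Ioo_subset_Icc_self hθ)).differentiableAt hmem
    have he : u θ = deriv q θ := derivWithin_of_mem_nhds hmem
    rw [he]; exact hd.hasDerivAt
  have hqd' : ∀ θ ∈ Ioo a t, deriv q θ = u θ := fun θ hθ => (hqd θ hθ).deriv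
  -- the continuous linear injections and Ψ maps
  set J2 : EuclideanSpace ℝ (Fin n) →L[ℝ] ℝ × EuclideanSpace ℝ (Fin n) × EuclideanSpace ℝ (Fin n) :=
    (ContinuousLinearMap.inr ℝ ℝ _).comp (ContinuousLinearMap.inl ℝ _ _) with hJ2
  set J3 : EuclideanSpace ℝ (Fin n) →L[ℝ] ℝ × EuclideanSpace ℝ (Fin n) × EuclideanSpace ℝ (Fin n) :=
    (ContinuousLinearMap.inr ℝ ℝ _).comp (ContinuousLinearMap.inr ℝ _ _) with hJ3
  have hJ2a : ∀ x, J2 x = (0, x, 0) := fun x => rfl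
  have hJ3a : ∀ x, J3 x = (0, 0, x) := fun x => rfl
  set Psi2 : ℝ × EuclideanSpace ℝ (Fin n) × EuclideanSpace ℝ (Fin n) → EuclideanSpace ℝ (Fin n) :=
    fun p => (toDual ℝ (EuclideanSpace ℝ (Fin n))).symm ((fderiv ℝ L p).comp J2) with hPsi2
  set Psi3 : ℝ × EuclideanSpace ℝ (Fin n) × EuclideanSpace ℝ (Fin n) → EuclideanSpace ℝ (Fin n) :=
    fun p => (toDual ℝ (EuclideanSpace ℝ (Fin n))).symm ((fderiv ℝ L p).comp J3) with hPsi3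
  have hLd : Differentiable ℝ L := hL.differentiable two_ne_zero
  have hPsiC : ∀ (J : EuclideanSpace ℝ (Fin n) →L[ℝ]
      ℝ × EuclideanSpace ℝ (Fin n) × EuclideanSpace ℝ (Fin n)),
      ContDiff ℝ 1 (fun p => (toDual ℝ (EuclideanSpace ℝ (Fin n))).symm ((fderiv ℝ L p).comp J)) := by
    intro J
    have h1 : ContDiff ℝ 1 (fderiv ℝ L) := hL.fderiv_right (by norm_num)
    have h2 := ((ContinuousLinearMap.compL ℝ (EuclideanSpace ℝ (Fin n))
        (ℝ × EuclideanSpace ℝ (Fin n) × EuclideanSpace ℝ (Fin n)) ℝ).flip J).contDiff (n := 1)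
    exact (LinearIsometryEquiv.contDiff _).comp (h2.comp h1)
  have hPsi2C : ContDiff ℝ 1 Psi2 := hPsiC J2
  have hPsi3C : ContDiff ℝ 1 Psi3 := hPsiC J3
  -- gradient identities
  have hfd2 : ∀ p : ℝ × EuclideanSpace ℝ (Fin n) × EuclideanSpace ℝ (Fin n),
      fderiv ℝ (fun y => L (p.1, y, p.2.2)) p.2.1 = (fderiv ℝ L p).comp J2 := by
    intro p
    have h1 : HasFDerivAt (fun y : EuclideanSpace ℝ (Fin n) => (p.1, y, p.2.2)) J2 p.2.1 := by
      have := (J2.hasFDerivAt (x := p.2.1)).const_add (p.1, (0 : EuclideanSpace ℝ (Fin n)), p.2.2)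
      refine this.congr_of_eventuallyEq (Filter.Eventually.of_forall fun y => ?_)
      simp [hJ2a, Prod.ext_iff]
    exact ((hLd p).hasFDerivAt.comp p.2.1 h1).fderiv
  have hfd3 : ∀ p : ℝ × EuclideanSpace ℝ (Fin n) × EuclideanSpace ℝ (Fin n),
      fderiv ℝ (fun v => L (p.1, p.2.1, v)) p.2.2 = (fderiv ℝ L p).comp J3 := by
    intro p
    have h1 : HasFDerivAt (fun v : EuclideanSpace ℝ (Fin n) => (p.1, p.2.1, v)) J3 p.2.2 := by
      have := (J3.hasFDerivAt (x := p.2.2)).const_add (p.1, p.2.1, (0 : EuclideanSpace ℝ (Fin n)))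
      refine this.congr_of_eventuallyEq (Filter.Eventually.of_forall fun v => ?_)
      simp [hJ3a, Prod.ext_iff]
    exact ((hLd p).hasFDerivAt.comp p.2.2 h1).fderiv
  have hgrad2 : ∀ p : ℝ × EuclideanSpace ℝ (Fin n) × EuclideanSpace ℝ (Fin n),
      gradient (fun y => L (p.1, y, p.2.2)) p.2.1 = Psi2 p := by
    intro p; rw [gradient, hfd2 p]
  have hgrad3 : ∀ p : ℝ × EuclideanSpace ℝ (Fin n) × EuclideanSpace ℝ (Fin n),
      gradient (fun v => L (p.1, p.2.1, v)) p.2.2 = Psi3 p := by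
    intro p; rw [gradient, hfd3 p]
  have hinner2 : ∀ p (x : EuclideanSpace ℝ (Fin n)), ⟪Psi2 p, x⟫ = fderiv ℝ L p (0, x, 0) := by
    intro p x; rw [hPsi2]; rw [toDual_symm_apply]; rfl
  have hinner3 : ∀ p (x : EuclideanSpace ℝ (Fin n)), ⟪Psi3 p, x⟫ = fderiv ℝ L p (0, 0, x) := by
    intro p x; rw [hPsi3]; rw [toDual_symm_apply]; rfl
  have hinner23 : ∀ p (x y : EuclideanSpace ℝ (Fin n)),
      ⟪Psi2 p, x⟫ + ⟪Psi3 p, y⟫ = fderiv ℝ L p (0, x, y) := by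
    intro p x y
    rw [hinner2, hinner3, ← map_add]
    norm_num
  -- G tilde and its derivative
  set Pt : ℝ → ℝ × EuclideanSpace ℝ (Fin n) × EuclideanSpace ℝ (Fin n) :=
    fun s => (s, q s, u s) with hPt
  have hPt1 : ContDiffOn ℝ 1 Pt (Icc a t) :=
    (contDiffOn_id).prodMk ((hq.of_le one_le_two).prodMk hu1)
  set Gt : ℝ → EuclideanSpace ℝ (Fin n) := fun s => Psi3 (Pt s) with hGt
  have hGt1 : ContDiffOn ℝ 1 Gt (Icc a t) := hPsi3C.comp_contDiffOn hPt1
  set Gt' : ℝ → EuclideanSpace ℝ (Fin n) := derivWithin Gt (Icc a t) with hGt'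
  have hGtc : ContinuousOn Gt (Icc a t) := hGt1.continuousOn
  have hGt'c : ContinuousOn Gt' (Icc a t) := hGt1.continuousOn_derivWithin hudiff le_rfl
  have hGtd : ∀ θ ∈ Ioo a t, HasDerivAt Gt (Gt' θ) θ := by
    intro θ hθ
    have hmem : Icc a t ∈ nhds θ := Icc_mem_nhds hθ.1 hθ.2
    have hd : DifferentiableAt ℝ Gt θ :=
      ((hGt1.differentiableOn one_ne_zero) θ (Ioo_subset_Icc_self hθ)).differentiableAt hmem
    have he : Gt' θ = deriv Gt θ := derivWithin_of_mem_nhds hmem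
    rw [he]; exact hd.hasDerivAt
  set A2 : ℝ → EuclideanSpace ℝ (Fin n) := fun s => Psi2 (Pt s) with hA2
  have hA2c : ContinuousOn A2 (Icc a t) := hPsi2C.continuous.comp_continuousOn hPt1.continuousOn
  -- statement functions on Ioo agree with tilde versions
  have hGeq : ∀ θ ∈ Ioo a t, gradient (fun v => L (θ, q θ, v)) (deriv q θ) = Gt θ := by
    intro θ hθ; rw [hqd' θ hθ]; exact hgrad3 (Pt θ)
  have hGderiv : ∀ θ ∈ Ioo a t,
      deriv (fun s => gradient (fun v => L (s, q s, v)) (deriv q s)) θ = Gt' θ := by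
    intro θ hθ
    have hev : (fun s => gradient (fun v => L (s, q s, v)) (deriv q s)) =ᶠ[nhds θ] Gt := by
      filter_upwards [Ioo_mem_nhds hθ.1 hθ.2] with s hs
      exact hGeq s hs
    rw [hev.deriv_eq, (hGtd θ hθ).deriv]
  have hgrad2eq : ∀ θ ∈ Ioo a t, gradient (fun y => L (θ, y, deriv q θ)) (q θ) = A2 θ := by
    intro θ hθ; rw [hqd' θ hθ]; exact hgrad2 (Pt θ)
  -- bounds on compacts
  obtain ⟨Cq, hCq⟩ := isCompact_Icc.exists_bound_of_continuousOn hqc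
  obtain ⟨Cu, hCu⟩ := isCompact_Icc.exists_bound_of_continuousOn huc
  obtain ⟨Ch0, hCh0⟩ := isCompact_Icc.exists_bound_of_continuousOn hh.continuous.continuousOn
  obtain ⟨Ch1, hCh1⟩ := isCompact_Icc.exists_bound_of_continuousOn
    (hh.continuous_deriv one_le_two).continuousOn
  obtain ⟨CG, hCG⟩ := isCompact_Icc.exists_bound_of_continuousOn hGtc
  obtain ⟨CG', hCG'⟩ := isCompact_Icc.exists_bound_of_continuousOn hGt'c
  obtain ⟨CA, hCA⟩ := isCompact_Icc.exists_bound_of_continuousOn hA2c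
  have hamem : a ∈ Icc a t := left_mem_Icc.mpr hat.le
  have htmem : t ∈ Icc a t := right_mem_Icc.mpr hat.le
  have hCq0 : 0 ≤ Cq := le_trans (norm_nonneg _) (hCq a hamem)
  have hCu0 : 0 ≤ Cu := le_trans (norm_nonneg _) (hCu a hamem)
  have hCh00 : 0 ≤ Ch0 := le_trans (norm_nonneg _) (hCh0 a hamem)
  have hCh10 : 0 ≤ Ch1 := le_trans (norm_nonneg _) (hCh1 a hamem)
  have hCG0 : 0 ≤ CG := le_trans (norm_nonneg _) (hCG a hamem)
  have hCG'0 : 0 ≤ CG' := le_trans (norm_nonneg _) (hCG' a hamem)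
  have hCA0 : 0 ≤ CA := le_trans (norm_nonneg _) (hCA a hamem)
  -- linear bound on h near t
  have hlin : ∀ θ ∈ Icc a t, ‖h θ‖ ≤ Ch1 * (t - θ) := by
    intro θ hθ
    have hhd : ∀ x ∈ Icc a t, HasDerivWithinAt h (deriv h x) (Icc a t) x := fun x _ =>
      ((hh.differentiable two_ne_zero).differentiableAt.hasDerivAt).hasDerivWithinAt
    have := (convex_Icc a t).norm_image_sub_le_of_norm_hasDerivWithin_le hhd hCh1 htmem hθ
    rw [h0t, sub_zero] at this
    calc ‖h θ‖ ≤ Ch1 * ‖θ - t‖ := this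
    _ = Ch1 * (t - θ) := by rw [Real.norm_eq_abs, abs_sub_comm, abs_of_nonneg (by linarith [hθ.2])]
  -- compact region and bounds for L and its partial gradients
  set K : Set (ℝ × EuclideanSpace ℝ (Fin n) × EuclideanSpace ℝ (Fin n)) :=
    (Icc a t) ×ˢ (Metric.closedBall 0 (Cq + Ch0 + 1) ×ˢ Metric.closedBall 0 (Cu + Ch1 + 1)) with hK
  have hKc : IsCompact K :=
    isCompact_Icc.prod ((isCompact_closedBall _ _).prod (isCompact_closedBall _ _))
  obtain ⟨C2, hC2⟩ := hKc.exists_bound_of_continuousOn hPsi2C.continuous.continuousOn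
  obtain ⟨C3, hC3⟩ := hKc.exists_bound_of_continuousOn hPsi3C.continuous.continuousOn
  obtain ⟨CL, hCL⟩ := hKc.exists_bound_of_continuousOn hL.continuous.continuousOn
  have hmemK : ∀ θ ∈ Icc a t, ∀ ε : ℝ, |ε| ≤ 1 →
      (θ, q θ + ε • h θ, u θ + ε • deriv h θ) ∈ K := by
    intro θ hθ ε hε
    refine ⟨hθ, ?_, ?_⟩ <;> rw [mem_closedBall_zero_iff]
    · calc ‖q θ + ε • h θ‖ ≤ ‖q θ‖ + ‖ε • h θ‖ := norm_add_le _ _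
      _ ≤ Cq + Ch0 + 1 := by
        rw [norm_smul, Real.norm_eq_abs]
        have := hCq θ hθ; have := hCh0 θ hθ
        nlinarith [norm_nonneg (h θ), abs_nonneg ε]
    · calc ‖u θ + ε • deriv h θ‖ ≤ ‖u θ‖ + ‖ε • deriv h θ‖ := norm_add_le _ _
      _ ≤ Cu + Ch1 + 1 := by
        rw [norm_smul, Real.norm_eq_abs]
        have := hCu θ hθ; have := hCh1 θ hθ
        nlinarith [norm_nonneg (deriv h θ), abs_nonneg ε]
  -- measurability helper
  have haesm : ∀ (f : ℝ → ℝ), ContinuousOn f (Ioo a t) →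
      AEStronglyMeasurable f (volume.restrict (Set.uIoc a t)) := by
    intro f hf
    rw [uIoc_of_le hat.le, ← Measure.restrict_congr_set Ioo_ae_eq_Ioc]
    exact hf.aestronglyMeasurable measurableSet_Ioo
  -- a.e. helper
  have haeIoo : ∀ (P : ℝ → Prop), (∀ θ ∈ Ioo a t, P θ) →
      (∀ᵐ θ ∂(volume : Measure ℝ), θ ∈ Set.uIoc a t → P θ) := by
    intro P hP
    have h1 : ∀ᵐ (x : ℝ) ∂volume, x ∉ ({t} : Set ℝ) := by
      rw [← measure_eq_zero_iff_ae_notMem]; exact measure_singleton t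
    filter_upwards [h1] with θ hθ hmem
    rw [uIoc_of_le hat.le] at hmem
    exact hP θ ⟨hmem.1, lt_of_le_of_ne hmem.2 (by simpa using hθ)⟩
  -- the two parametrized integrands
  set F : ℝ → ℝ → ℝ :=
    fun ε θ => L (θ, q θ + ε • h θ, deriv q θ + ε • deriv h θ) * w θ with hF
  set F' : ℝ → ℝ → ℝ := fun ε θ =>
    (⟪Psi2 (θ, q θ + ε • h θ, deriv q θ + ε • deriv h θ), h θ⟫ +
      ⟪Psi3 (θ, q θ + ε • h θ, deriv q θ + ε • deriv h θ), deriv h θ⟫) * w θ with hF'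
  have hqIoo : ContinuousOn q (Ioo a t) := hqc.mono Ioo_subset_Icc_self
  have hvIoo : ContinuousOn (deriv q) (Ioo a t) :=
    (huc.mono Ioo_subset_Icc_self).congr hqd'
  have hptIoo : ∀ ε : ℝ, ContinuousOn
      (fun θ => ((θ : ℝ), q θ + ε • h θ, deriv q θ + ε • deriv h θ)) (Ioo a t) := by
    intro ε
    exact (continuousOn_id).prodMk
      ((hqIoo.add (hh.continuous.const_smul ε).continuousOn).prodMk
        (hvIoo.add ((hh.continuous_deriv one_le_two).const_smul ε).continuousOn))
  have hFcont : ∀ ε : ℝ, ContinuousOn (F ε) (Ioo a t) := fun ε =>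
    (hL.continuous.comp_continuousOn (hptIoo ε)).mul hwcont
  have hF'cont : ∀ ε : ℝ, ContinuousOn (F' ε) (Ioo a t) := by
    intro ε
    apply ContinuousOn.mul ?_ hwcont
    exact ((hPsi2C.continuous.comp_continuousOn (hptIoo ε)).inner
        hh.continuous.continuousOn).add
      ((hPsi3C.continuous.comp_continuousOn (hptIoo ε)).inner
        (hh.continuous_deriv one_le_two).continuousOn)
  have hmemK' : ∀ θ ∈ Ioo a t, ∀ ε : ℝ, |ε| ≤ 1 →
      (θ, q θ + ε • h θ, deriv q θ + ε • deriv h θ) ∈ K := by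
    intro θ hθ ε hε
    rw [hqd' θ hθ]
    exact hmemK θ (Ioo_subset_Icc_self hθ) ε hε
  have hwabs : ∀ θ ∈ Ioo a t, ‖w θ‖ = w θ := fun θ hθ => by
    rw [Real.norm_eq_abs, abs_of_nonneg (hwnn θ (Ioo_subset_Icc_self hθ))]
  have hstep1 : IntervalIntegrable (F' 0) volume a t ∧
      HasDerivAt (fun ε => ∫ θ in a..t, F ε θ) (∫ θ in a..t, F' 0 θ) 0 := by
    apply intervalIntegral.hasDerivAt_integral_of_dominated_loc_of_deriv_le
      (s := Metric.ball 0 1) (bound := fun θ => (C2 * Ch0 + C3 * Ch1) * w θ) (Metric.ball_mem_nhds 0 one_pos)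
    · exact Filter.Eventually.of_forall (fun ε => haesm _ (hFcont ε))
    · apply falva_aux_II hat hα0 (hFcont 0) (C := CL)
      intro θ hθ
      have hK0 := hmemK' θ hθ 0 (by norm_num)
      have hLb := hCL _ hK0
      rw [hF]
      simp only [norm_mul]
      rw [hwabs θ hθ]
      exact mul_le_mul_of_nonneg_right hLb (hwnn θ (Ioo_subset_Icc_self hθ))
    · exact haesm _ (hF'cont 0)
    · apply haeIoo
      intro θ hθ ε hε
      rw [Metric.mem_ball, dist_zero_right, Real.norm_eq_abs] at hε
      have hKe := hmemK' θ hθ ε hε.le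
      rw [hF']
      simp only [norm_mul]
      rw [hwabs θ hθ]
      apply mul_le_mul_of_nonneg_right ?_ (hwnn θ (Ioo_subset_Icc_self hθ))
      exact falva_aux_inner_bound _ _ _ _ (hC2 _ hKe) (hC3 _ hKe)
        (hCh0 θ (Ioo_subset_Icc_self hθ)) (hCh1 θ (Ioo_subset_Icc_self hθ)) hCh00 hCh10
    · exact (falva_aux_w_int hα0).const_mul _
    · apply haeIoo
      intro θ hθ ε hε
      have hptd : HasDerivAt
          (fun ε : ℝ => ((θ : ℝ), q θ + ε • h θ, deriv q θ + ε • deriv h θ))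
          ((0 : ℝ), h θ, deriv h θ) ε := by
        apply HasDerivAt.prodMk (hasDerivAt_const ε θ)
        apply HasDerivAt.prodMk
        · simpa using ((hasDerivAt_id ε).smul_const (h θ)).const_add (q θ)
        · simpa using ((hasDerivAt_id ε).smul_const (deriv h θ)).const_add (deriv q θ)
      have hd := ((hLd _).hasFDerivAt.comp_hasDerivAt ε hptd).mul_const (w θ)
      have heq := hinner23 (θ, q θ + ε • h θ, deriv q θ + ε • deriv h θ) (h θ) (deriv h θ)
      rw [hF', hF]
      simp only
      rw [heq]
      exact hd
    -- integrability of the pieces (with deriv-within versions)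
  have hwcont' : ContinuousOn w (Ioo a t) := hwcont
  have hA2Ioo : ContinuousOn A2 (Ioo a t) := hA2c.mono Ioo_subset_Icc_self
  have hGtIoo : ContinuousOn Gt (Ioo a t) := hGtc.mono Ioo_subset_Icc_self
  have hGt'Ioo : ContinuousOn Gt' (Ioo a t) := hGt'c.mono Ioo_subset_Icc_self
  have hwnn' : ∀ θ ∈ Ioo a t, (0:ℝ) ≤ (t - θ) ^ (α - 1) :=
    fun θ hθ => hwnn θ (Ioo_subset_Icc_self hθ)
  have hwa : ∀ θ ∈ Ioo a t, ‖(t - θ) ^ (α - 1)‖ = (t - θ) ^ (α - 1) :=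
    fun θ hθ => by rw [Real.norm_eq_abs, abs_of_nonneg (hwnn' θ hθ)]
  have hAint : IntervalIntegrable
      (fun θ => (inner (𝕜 := ℝ) (A2 θ) (h θ)) * (t - θ) ^ (α - 1)) volume a t := by
    apply falva_aux_II hat hα0
      ((hA2Ioo.inner hh.continuous.continuousOn).mul hwcont) (C := CA * Ch0)
    intro θ hθ
    have hθ' := Ioo_subset_Icc_self hθ
    rw [Pi.mul_apply, norm_mul, hwa θ hθ]
    apply mul_le_mul_of_nonneg_right ?_ (hwnn' θ hθ)
    calc ‖inner (𝕜 := ℝ) (A2 θ) (h θ)‖ ≤ ‖A2 θ‖ * ‖h θ‖ := norm_inner_le_norm _ _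
    _ ≤ CA * Ch0 := mul_le_mul (hCA θ hθ') (hCh0 θ hθ') (norm_nonneg _) hCA0
  have hBint : IntervalIntegrable
      (fun θ => (inner (𝕜 := ℝ) (Gt θ) (deriv h θ)) * (t - θ) ^ (α - 1)) volume a t := by
    apply falva_aux_II hat hα0
      ((hGtIoo.inner (hh.continuous_deriv one_le_two).continuousOn).mul hwcont) (C := CG * Ch1)
    intro θ hθ
    have hθ' := Ioo_subset_Icc_self hθ
    rw [Pi.mul_apply, norm_mul, hwa θ hθ]
    apply mul_le_mul_of_nonneg_right ?_ (hwnn' θ hθ)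
    calc ‖inner (𝕜 := ℝ) (Gt θ) (deriv h θ)‖ ≤ ‖Gt θ‖ * ‖deriv h θ‖ := norm_inner_le_norm _ _
    _ ≤ CG * Ch1 := mul_le_mul (hCG θ hθ') (hCh1 θ hθ') (norm_nonneg _) hCG0
  have hCint : IntervalIntegrable
      (fun θ => (inner (𝕜 := ℝ) (Gt' θ) (h θ)) * (t - θ) ^ (α - 1)) volume a t := by
    apply falva_aux_II hat hα0
      ((hGt'Ioo.inner hh.continuous.continuousOn).mul hwcont) (C := CG' * Ch0)
    intro θ hθ
    have hθ' := Ioo_subset_Icc_self hθ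
    rw [Pi.mul_apply, norm_mul, hwa θ hθ]
    apply mul_le_mul_of_nonneg_right ?_ (hwnn' θ hθ)
    calc ‖inner (𝕜 := ℝ) (Gt' θ) (h θ)‖ ≤ ‖Gt' θ‖ * ‖h θ‖ := norm_inner_le_norm _ _
    _ ≤ CG' * Ch0 := mul_le_mul (hCG' θ hθ') (hCh0 θ hθ') (norm_nonneg _) hCG'0
  have hDint : IntervalIntegrable
      (fun θ => ((1 - α) / (t - θ)) * (inner (𝕜 := ℝ) (Gt θ) (h θ)) * (t - θ) ^ (α - 1))
      volume a t := by
    apply falva_aux_II hat hα0 ?_ (C := (1 - α) * (CG * Ch1))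
    · intro θ hθ
      have hθ' := Ioo_subset_Icc_self hθ
      have h0 : (0:ℝ) < t - θ := sub_pos.mpr hθ.2
      rw [norm_mul, norm_mul, hwa θ hθ, Real.norm_eq_abs ((1 - α) / (t - θ)),
        abs_of_nonneg (div_nonneg (by linarith) h0.le)]
      apply mul_le_mul_of_nonneg_right ?_ (hwnn' θ hθ)
      have i1 : ‖inner (𝕜 := ℝ) (Gt θ) (h θ)‖ ≤ CG * (Ch1 * (t - θ)) := by
        calc ‖inner (𝕜 := ℝ) (Gt θ) (h θ)‖ ≤ ‖Gt θ‖ * ‖h θ‖ := norm_inner_le_norm _ _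
        _ ≤ CG * (Ch1 * (t - θ)) := mul_le_mul (hCG θ hθ') (hlin θ hθ') (norm_nonneg _) hCG0
      calc (1 - α) / (t - θ) * ‖inner (𝕜 := ℝ) (Gt θ) (h θ)‖
          ≤ (1 - α) / (t - θ) * (CG * (Ch1 * (t - θ))) :=
            mul_le_mul_of_nonneg_left i1 (div_nonneg (by linarith) h0.le)
      _ = (1 - α) * (CG * Ch1) := by field_simp
    · apply ContinuousOn.mul ?_ hwcont
      apply ContinuousOn.mul ?_ (hGtIoo.inner hh.continuous.continuousOn)
      apply ContinuousOn.div continuousOn_const (continuous_const.sub continuous_id).continuousOn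
      exact fun x hx => ne_of_gt (sub_pos.mpr hx.2)
  -- integration by parts
  have hibp := falva_ibp hat hα0 hα1 Gt Gt' h hGtc hGt'c hGtd hh h0a h0t
  -- the target integrand equals A - C - D on Ioo
  have hACD : (∫ θ in a..t,
        ⟪gradient (fun y => L (θ, y, deriv q θ)) (q θ)
            - deriv (fun s => gradient (fun v => L (s, q s, v)) (deriv q s)) θ
            - ((1 - α) / (t - θ)) • gradient (fun v => L (θ, q θ, v)) (deriv q θ),
          h θ⟫ * (t - θ) ^ (α - 1))
      = (∫ θ in a..t, (inner (𝕜 := ℝ) (A2 θ) (h θ)) * (t - θ) ^ (α - 1))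
        - (∫ θ in a..t, (inner (𝕜 := ℝ) (Gt' θ) (h θ)) * (t - θ) ^ (α - 1))
        - ∫ θ in a..t, ((1 - α) / (t - θ)) * (inner (𝕜 := ℝ) (Gt θ) (h θ)) * (t - θ) ^ (α - 1) := by
    rw [← intervalIntegral.integral_sub hAint hCint,
      ← intervalIntegral.integral_sub (hAint.sub hCint) hDint]
    apply intervalIntegral.integral_congr_ae
    apply falva_aux_ae hat
    intro θ hθ
    rw [hgrad2eq θ hθ, hGderiv θ hθ, hGeq θ hθ]
    rw [inner_sub_left, inner_sub_left, real_inner_smul_left]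
    ring
  -- the derivative integrand equals A + B on Ioo
  have hF0eq : (∫ θ in a..t, F' 0 θ)
      = (∫ θ in a..t, (inner (𝕜 := ℝ) (A2 θ) (h θ)) * (t - θ) ^ (α - 1))
        + ∫ θ in a..t, (inner (𝕜 := ℝ) (Gt θ) (deriv h θ)) * (t - θ) ^ (α - 1) := by
    rw [← intervalIntegral.integral_add hAint hBint]
    apply intervalIntegral.integral_congr_ae
    apply falva_aux_ae hat
    intro θ hθ
    rw [hF']
    simp only [zero_smul, add_zero, hA2, hGt, hPt, hw]
    rw [hqd' θ hθ]
    ring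
  -- final assembly
  have hSF : (∫ θ in a..t,
        ⟪gradient (fun y => L (θ, y, deriv q θ)) (q θ)
            - deriv (fun s => gradient (fun v => L (s, q s, v)) (deriv q s)) θ
            - ((1 - α) / (t - θ)) • gradient (fun v => L (θ, q θ, v)) (deriv q θ),
          h θ⟫ * (t - θ) ^ (α - 1))
      = ∫ θ in a..t, F' 0 θ := by
    rw [hACD, hF0eq, hibp]
    ring
  have hfin := hstep1.2.const_mul (1 / Real.Gamma α)
  rw [hSF]
  exact hfin
end

section
/- Let n ≥ 1, let a < t be real numbers, let 0 < α ≤ 1, let L : ℝ × ℝⁿ × ℝⁿ × ℝⁿ → ℝ be of class C⁴, and let q : ℝ → ℝⁿ be of class C⁴ on [a,t]. Then for every C⁴ function h : ℝ → ℝⁿ with h(a) = h(t) = 0 and h'(a) = h'(t) = 0, the derivative at ε = 0 of ε ↦ (1/Γ(α)) ∫_a^t L(θ, q(θ)+εh(θ), q'(θ)+εh'(θ), q''(θ)+εh''(θ)) (t−θ)^{α−1} dθ equals (1/Γ(α)) ∫_a^t ⟨ ∂₂L − (d/dθ)∂₃L + (d²/dθ²)∂₄L − ( ((1−α)/(t−θ))(∂₃L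 − 2(d/dθ)∂₄L) − ((1−α)(2−α)/(t−θ)²) ∂₄L ), h(θ) ⟩ (t−θ)^{α−1} dθ, where each partial derivative of L is evaluated at (θ, q(θ), q'(θ), q''(θ)). -/
open scoped RealInnerProductSpace
open Set MeasureTheory intervalIntegral InnerProductSpace Filter Topology
open scoped Interval

section Aux

variable {n : ℕ}

local notation "E" => EuclideanSpace ℝ (Fin n)
local notation "X" => (ℝ × EuclideanSpace ℝ (Fin n) × EuclideanSpace ℝ (Fin n) × EuclideanSpace ℝ (Fin n))

noncomputable def iota2 (n : ℕ) : E →L[ℝ] X :=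
  (0 : E →L[ℝ] ℝ).prod ((ContinuousLinearMap.id ℝ E).prod 0)

noncomputable def iota3 (n : ℕ) : E →L[ℝ] X :=
  (0 : E →L[ℝ] ℝ).prod ((0 : E →L[ℝ] E).prod ((ContinuousLinearMap.id ℝ E).prod 0))

noncomputable def iota4 (n : ℕ) : E →L[ℝ] X :=
  (0 : E →L[ℝ] ℝ).prod ((0 : E →L[ℝ] E).prod ((0 : E →L[ℝ] E).prod (ContinuousLinearMap.id ℝ E)))

@[simp] lemma iota2_apply (v : E) : iota2 n v = (0, v, 0, 0) := rfl
@[simp] lemma iota3_apply (v : E) : iota3 n v = (0, 0, v, 0) := rfl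
@[simp] lemma iota4_apply (v : E) : iota4 n v = (0, 0, 0, v) := rfl

lemma tuple_decomp (u v w : E) : ((0 : ℝ), u, v, w) = iota2 n u + iota3 n v + iota4 n w := by
  simp [Prod.ext_iff]

noncomputable def Gr (L : X → ℝ) (ι : E →L[ℝ] X) (p : X) : E :=
  (toDual ℝ E).symm ((fderiv ℝ L p).comp ι)

lemma inner_Gr (L : X → ℝ) (ι : E →L[ℝ] X) (p : X) (v : E) :
    ⟪Gr L ι p, v⟫ = fderiv ℝ L p (ι v) := by
  rw [Gr, toDual_symm_apply]; rfl

lemma contDiff_Gr {L : X → ℝ} (hL : ContDiff ℝ 4 L) (ι : E →L[ℝ] X) :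
    ContDiff ℝ 3 (Gr L ι) := by
  have h1 : ContDiff ℝ 3 (fderiv ℝ L) := hL.fderiv_right (by norm_num)
  have h2 : ContDiff ℝ 3 (fun p : X => (fderiv ℝ L p).comp ι) :=
    (((ContinuousLinearMap.compL ℝ E X ℝ).flip ι).contDiff).comp h1
  exact ((toDual ℝ E).symm.contDiff).comp h2

lemma gradient_eq_Gr2 {L : X → ℝ} (hL : ContDiff ℝ 4 L) (c₁ : ℝ) (x c₃ c₄ : E) :
    gradient (fun y => L (c₁, y, c₃, c₄)) x = Gr L (iota2 n) (c₁, x, c₃, c₄) := by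
  have hA : HasFDerivAt (fun y : E => ((c₁, y, c₃, c₄) : X)) (iota2 n) x :=
    HasFDerivAt.prodMk (hasFDerivAt_const c₁ x) (HasFDerivAt.prodMk (hasFDerivAt_id x)
      (HasFDerivAt.prodMk (hasFDerivAt_const c₃ x) (hasFDerivAt_const c₄ x)))
  have hcomp := ((hL.differentiable (by norm_num)).differentiableAt.hasFDerivAt
    (x := ((c₁, x, c₃, c₄) : X))).comp x hA
  rw [gradient, Gr]; congr 1; exact (hcomp : HasFDerivAt _ _ x).fderiv

lemma gradient_eq_Gr3 {L : X → ℝ} (hL : ContDiff ℝ 4 L) (c₁ : ℝ) (c₂ x c₄ : E) :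
    gradient (fun v => L (c₁, c₂, v, c₄)) x = Gr L (iota3 n) (c₁, c₂, x, c₄) := by
  have hA : HasFDerivAt (fun v : E => ((c₁, c₂, v, c₄) : X)) (iota3 n) x :=
    HasFDerivAt.prodMk (hasFDerivAt_const c₁ x) (HasFDerivAt.prodMk (hasFDerivAt_const c₂ x)
      (HasFDerivAt.prodMk (hasFDerivAt_id x) (hasFDerivAt_const c₄ x)))
  have hcomp := ((hL.differentiable (by norm_num)).differentiableAt.hasFDerivAt
    (x := ((c₁, c₂, x, c₄) : X))).comp x hA
  rw [gradient, Gr]; congr 1; exact (hcomp : HasFDerivAt _ _ x).fderiv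

lemma gradient_eq_Gr4 {L : X → ℝ} (hL : ContDiff ℝ 4 L) (c₁ : ℝ) (c₂ c₃ x : E) :
    gradient (fun w => L (c₁, c₂, c₃, w)) x = Gr L (iota4 n) (c₁, c₂, c₃, x) := by
  have hA : HasFDerivAt (fun w : E => ((c₁, c₂, c₃, w) : X)) (iota4 n) x :=
    HasFDerivAt.prodMk (hasFDerivAt_const c₁ x) (HasFDerivAt.prodMk (hasFDerivAt_const c₂ x)
      (HasFDerivAt.prodMk (hasFDerivAt_const c₃ x) (hasFDerivAt_id x)))
  have hcomp := ((hL.differentiable (by norm_num)).differentiableAt.hasFDerivAt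
    (x := ((c₁, c₂, c₃, x) : X))).comp x hA
  rw [gradient, Gr]; congr 1; exact (hcomp : HasFDerivAt _ _ x).fderiv

end Aux

set_option maxHeartbeats 4000000 in
/-- **First variation of the second-order FALVA functional.**
For every `C⁴` variation `h` with `h(a) = h(t) = 0` and `h'(a) = h'(t) = 0`, the
derivative at `ε = 0` of
`ε ↦ (1/Γ(α)) ∫_a^t L(θ, q+εh, q'+εh', q''+εh'') (t-θ)^(α-1) dθ` equals
`(1/Γ(α)) ∫_a^t ⟨∂₂L - d/dθ ∂₃L + d²/dθ² ∂₄L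
  - (((1-α)/(t-θ))(∂₃L - 2 d/dθ ∂₄L) - ((1-α)(2-α)/(t-θ)²) ∂₄L), h(θ)⟩ (t-θ)^(α-1) dθ`. -/
theorem falva_second_order_first_variation
    (n : ℕ) (hn : 1 ≤ n) (a t α : ℝ) (hat : a < t) (hα0 : 0 < α) (hα1 : α ≤ 1)
    (L : ℝ × EuclideanSpace ℝ (Fin n) × EuclideanSpace ℝ (Fin n) ×
          EuclideanSpace ℝ (Fin n) → ℝ)
    (hL : ContDiff ℝ 4 L)
    (q : ℝ → EuclideanSpace ℝ (Fin n))
    (hq : ContDiffOn ℝ 4 q (Set.Icc a t)) :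
    ∀ h : ℝ → EuclideanSpace ℝ (Fin n),
      ContDiff ℝ 4 h → h a = 0 → h t = 0 → deriv h a = 0 → deriv h t = 0 →
      HasDerivAt (fun ε : ℝ => (1 / Real.Gamma α) *
          ∫ θ in a..t,
            L (θ, q θ + ε • h θ, deriv q θ + ε • deriv h θ,
                deriv (deriv q) θ + ε • deriv (deriv h) θ) * (t - θ) ^ (α - 1))
        ((1 / Real.Gamma α) *
          ∫ θ in a..t,
            ⟪gradient (fun y => L (θ, y, deriv q θ, deriv (deriv q) θ)) (q θ)
                - deriv (fun s =>
                    gradient (fun v => L (s, q s, v, deriv (deriv q) s)) (deriv q s)) θ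
                + deriv (deriv (fun s =>
                    gradient (fun w => L (s, q s, deriv q s, w)) (deriv (deriv q) s))) θ
                - (((1 - α) / (t - θ)) •
                      (gradient (fun v => L (θ, q θ, v, deriv (deriv q) θ)) (deriv q θ)
                        - (2 : ℝ) • deriv (fun s =>
                            gradient (fun w => L (s, q s, deriv q s, w))
                              (deriv (deriv q) s)) θ)
                    - ((1 - α) * (2 - α) / (t - θ) ^ 2) •
                        gradient (fun w => L (θ, q θ, deriv q θ, w)) (deriv (deriv q) θ)),
              h θ⟫ * (t - θ) ^ (α - 1))
        0 := by
  intro h hh hha0 hht0 hda0 hdt0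
  have hIcc : UniqueDiffOn ℝ (Set.Icc a t) := uniqueDiffOn_Icc hat
  -- basic objects
  set Q1 : ℝ → EuclideanSpace ℝ (Fin n) := derivWithin q (Icc a t) with hQ1def
  set Q2 : ℝ → EuclideanSpace ℝ (Fin n) := derivWithin Q1 (Icc a t) with hQ2def
  set P : ℝ → ℝ × EuclideanSpace ℝ (Fin n) × EuclideanSpace ℝ (Fin n) × EuclideanSpace ℝ (Fin n) := fun θ => (θ, q θ, Q1 θ, Q2 θ) with hPdef
  set A : ℝ → EuclideanSpace ℝ (Fin n) := fun θ => Gr L (iota2 n) (P θ) with hAdef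
  set B : ℝ → EuclideanSpace ℝ (Fin n) := fun θ => Gr L (iota3 n) (P θ) with hBdef
  set C : ℝ → EuclideanSpace ℝ (Fin n) := fun θ => Gr L (iota4 n) (P θ) with hCdef
  set B1 : ℝ → EuclideanSpace ℝ (Fin n) := derivWithin B (Icc a t) with hB1def
  set C1 : ℝ → EuclideanSpace ℝ (Fin n) := derivWithin C (Icc a t) with hC1def
  set C2 : ℝ → EuclideanSpace ℝ (Fin n) := derivWithin C1 (Icc a t) with hC2def
  set w : ℝ → ℝ := fun θ => (t - θ) ^ (α - 1) with hwdef
  set H : ℝ → ℝ × EuclideanSpace ℝ (Fin n) × EuclideanSpace ℝ (Fin n) × EuclideanSpace ℝ (Fin n) := fun θ => ((0:ℝ), h θ, deriv h θ, deriv (deriv h) θ) with hHdef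
  set g : ℝ → ℝ := fun θ =>
    (⟪A θ, h θ⟫ + ⟪B θ, deriv h θ⟫ + ⟪C θ, deriv (deriv h) θ⟫) * w θ with hgdef
  set ψ : ℝ → ℝ := fun θ =>
    ⟪A θ - B1 θ + C2 θ - (((1-α)/(t-θ)) • (B θ - (2:ℝ) • C1 θ)
      - ((1-α)*(2-α)/(t-θ)^2) • C θ), h θ⟫ * w θ with hψdef
  set φ : ℝ → ℝ := fun θ =>
    w θ * ⟪B θ, h θ⟫ + w θ * ⟪C θ, deriv h θ⟫
      - ⟪w θ • C1 θ + ((1-α)*(t-θ)^(α-2)) • C θ, h θ⟫ with hφdef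
  -- smoothness of building blocks
  have hQ1s : ContDiffOn ℝ 3 Q1 (Icc a t) := hq.derivWithin hIcc (by norm_num)
  have hQ2s : ContDiffOn ℝ 2 Q2 (Icc a t) := hQ1s.derivWithin hIcc (by norm_num)
  have hPs : ContDiffOn ℝ 2 P (Icc a t) :=
    contDiffOn_id.prodMk ((hq.of_le (by norm_num)).prodMk
      ((hQ1s.of_le (by norm_num)).prodMk hQ2s))
  have hAs : ContDiffOn ℝ 2 A (Icc a t) :=
    ((contDiff_Gr hL (iota2 n)).of_le (by norm_num)).comp_contDiffOn hPs
  have hBs : ContDiffOn ℝ 2 B (Icc a t) :=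
    ((contDiff_Gr hL (iota3 n)).of_le (by norm_num)).comp_contDiffOn hPs
  have hCs : ContDiffOn ℝ 2 C (Icc a t) :=
    ((contDiff_Gr hL (iota4 n)).of_le (by norm_num)).comp_contDiffOn hPs
  have hB1s : ContDiffOn ℝ 1 B1 (Icc a t) := hBs.derivWithin hIcc (by norm_num)
  have hC1s : ContDiffOn ℝ 1 C1 (Icc a t) := hCs.derivWithin hIcc (by norm_num)
  have hC2s : ContinuousOn C2 (Icc a t) :=
    (hC1s.derivWithin (m := 0) hIcc (by norm_num)).continuousOn
  have hh1 : ContDiff ℝ 3 (deriv h) := by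
    have h4 : (4 : WithTop ℕ∞) = 3 + 1 := by norm_num
    rw [h4] at hh
    exact (contDiff_succ_iff_deriv.mp hh).2.2
  have hh2 : ContDiff ℝ 2 (deriv (deriv h)) := by
    have h3 : (3 : WithTop ℕ∞) = 2 + 1 := by norm_num
    rw [h3] at hh1
    exact (contDiff_succ_iff_deriv.mp hh1).2.2
  -- generic: hasDerivAt from ContDiffOn on Icc at interior points
  have hHD : ∀ (f : ℝ → EuclideanSpace ℝ (Fin n)), ContDiffOn ℝ 1 f (Icc a t) → ∀ θ ∈ Ioo a t,
      HasDerivAt f (derivWithin f (Icc a t) θ) θ := by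
    intro f hf θ hθ
    have hmem : Icc a t ∈ 𝓝 θ := Icc_mem_nhds hθ.1 hθ.2
    have hd : DifferentiableAt ℝ f θ :=
      (hf.differentiableOn (by norm_num)).differentiableAt hmem
    rw [derivWithin_of_mem_nhds hmem]
    exact hd.hasDerivAt
  -- identification of deriv q with Q1, Q2 on Ioo
  have hq1 : ∀ θ ∈ Ioo a t, deriv q θ = Q1 θ := by
    intro θ hθ
    rw [hQ1def]
    exact (derivWithin_of_mem_nhds (Icc_mem_nhds hθ.1 hθ.2)).symm
  have hq2 : ∀ θ ∈ Ioo a t, deriv (deriv q) θ = Q2 θ := by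
    intro θ hθ
    have he : deriv q =ᶠ[𝓝 θ] Q1 := by
      filter_upwards [Ioo_mem_nhds hθ.1 hθ.2] with s hs using hq1 s hs
    rw [he.deriv_eq, hQ2def, ← derivWithin_of_mem_nhds (Icc_mem_nhds hθ.1 hθ.2)]
  -- statement functions agree with A B C on Ioo
  have hBeq : ∀ s ∈ Ioo a t,
      gradient (fun v => L (s, q s, v, deriv (deriv q) s)) (deriv q s) = B s := by
    intro s hs
    rw [gradient_eq_Gr3 hL, hq1 s hs, hq2 s hs, hBdef, hPdef]
  have hCeq : ∀ s ∈ Ioo a t,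
      gradient (fun z => L (s, q s, deriv q s, z)) (deriv (deriv q) s) = C s := by
    intro s hs
    rw [gradient_eq_Gr4 hL, hq1 s hs, hq2 s hs, hCdef, hPdef]
  have hdB : ∀ θ ∈ Ioo a t,
      deriv (fun s => gradient (fun v => L (s, q s, v, deriv (deriv q) s)) (deriv q s)) θ
        = B1 θ := by
    intro θ hθ
    have he : (fun s => gradient (fun v => L (s, q s, v, deriv (deriv q) s)) (deriv q s))
        =ᶠ[𝓝 θ] B := by
      filter_upwards [Ioo_mem_nhds hθ.1 hθ.2] with s hs using hBeq s hs
    rw [he.deriv_eq, hB1def, ← derivWithin_of_mem_nhds (Icc_mem_nhds hθ.1 hθ.2)]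
  have hdC : ∀ θ ∈ Ioo a t,
      deriv (fun s => gradient (fun z => L (s, q s, deriv q s, z)) (deriv (deriv q) s)) θ
        = C1 θ := by
    intro θ hθ
    have he : (fun s => gradient (fun z => L (s, q s, deriv q s, z)) (deriv (deriv q) s))
        =ᶠ[𝓝 θ] C := by
      filter_upwards [Ioo_mem_nhds hθ.1 hθ.2] with s hs using hCeq s hs
    rw [he.deriv_eq, hC1def, ← derivWithin_of_mem_nhds (Icc_mem_nhds hθ.1 hθ.2)]
  have hddC : ∀ θ ∈ Ioo a t,
      deriv (deriv (fun s => gradient (fun z => L (s, q s, deriv q s, z))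
        (deriv (deriv q) s))) θ = C2 θ := by
    intro θ hθ
    have he : deriv (fun s => gradient (fun z => L (s, q s, deriv q s, z))
        (deriv (deriv q) s)) =ᶠ[𝓝 θ] C1 := by
      filter_upwards [Ioo_mem_nhds hθ.1 hθ.2] with s hs using hdC s hs
    rw [he.deriv_eq, hC2def, ← derivWithin_of_mem_nhds (Icc_mem_nhds hθ.1 hθ.2)]
  -- the claimed integrand equals ψ on Ioo
  have hclaim : ∀ θ ∈ Ioo a t,
      ⟪gradient (fun y => L (θ, y, deriv q θ, deriv (deriv q) θ)) (q θ)
                - deriv (fun s =>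
                    gradient (fun v => L (s, q s, v, deriv (deriv q) s)) (deriv q s)) θ
                + deriv (deriv (fun s =>
                    gradient (fun z => L (s, q s, deriv q s, z)) (deriv (deriv q) s))) θ
                - (((1 - α) / (t - θ)) •
                      (gradient (fun v => L (θ, q θ, v, deriv (deriv q) θ)) (deriv q θ)
                        - (2 : ℝ) • deriv (fun s =>
                            gradient (fun z => L (s, q s, deriv q s, z))
                              (deriv (deriv q) s)) θ)
                    - ((1 - α) * (2 - α) / (t - θ) ^ 2) •
                        gradient (fun z => L (θ, q θ, deriv q θ, z)) (deriv (deriv q) θ)),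
              h θ⟫ * (t - θ) ^ (α - 1) = ψ θ := by
    intro θ hθ
    rw [hdB θ hθ, hddC θ hθ, hdC θ hθ, hBeq θ hθ, hCeq θ hθ, gradient_eq_Gr2 hL,
      hq1 θ hθ, hq2 θ hθ]
  -- ae helper
  have hae : ∀ (Pr : ℝ → Prop), (∀ θ ∈ Ioo a t, Pr θ) →
      (∀ᵐ θ ∂(volume : Measure ℝ), θ ∈ Ι a t → Pr θ) := by
    intro Pr hPr
    have h0 : (volume : Measure ℝ) {t} = 0 := Real.volume_singleton
    filter_upwards [MeasureTheory.compl_mem_ae_iff.mpr h0] with θ hθ hmem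
    rw [Set.uIoc_of_le hat.le] at hmem
    exact hPr θ ⟨hmem.1, lt_of_le_of_ne hmem.2 (by simpa using hθ)⟩
  have hmeas : ∀ (f : ℝ → ℝ), ContinuousOn f (Ioo a t) →
      AEStronglyMeasurable f ((volume : Measure ℝ).restrict (Ι a t)) := by
    intro f hf
    have hres : (volume : Measure ℝ).restrict (Ι a t) = volume.restrict (Ioo a t) := by
      rw [Set.uIoc_of_le hat.le]
      exact MeasureTheory.Measure.restrict_congr_set Ioo_ae_eq_Ioc.symm
    rw [hres]
    exact hf.aestronglyMeasurable measurableSet_Ioo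
  have hw_int : IntervalIntegrable w volume a t := by
    have h1 : IntervalIntegrable (fun x : ℝ => x ^ (α - 1)) volume 0 (t - a) :=
      intervalIntegral.intervalIntegrable_rpow' (by linarith)
    have h2 := (h1.comp_sub_left t).symm
    have e1 : t - 0 = t := by ring
    have e2 : t - (t - a) = a := by ring
    rw [e1, e2] at h2
    exact h2
  have hw_pos : ∀ θ ∈ Ioo a t, 0 < w θ := by
    intro θ hθ
    rw [hwdef]
    exact Real.rpow_pos_of_pos (by linarith [hθ.2]) _
  have hdom : ∀ (f : ℝ → ℝ) (K : ℝ), ContinuousOn f (Ioo a t) →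
      (∀ θ ∈ Ioo a t, ‖f θ‖ ≤ K * w θ) → IntervalIntegrable f volume a t := by
    intro f K hf hbd
    rw [intervalIntegrable_iff]
    refine MeasureTheory.Integrable.mono' (intervalIntegrable_iff.mp (hw_int.const_mul K))
      (hmeas f hf) ?_
    exact (MeasureTheory.ae_restrict_iff' measurableSet_uIoc).mpr (hae _ hbd)
  -- Taylor-type bounds on h near t
  obtain ⟨N, hN0, hNh, hNh', hNh''⟩ : ∃ N : ℝ, 0 ≤ N ∧
      (∀ θ ∈ Icc a t, ‖h θ‖ ≤ N * (t - θ) * (t - θ)) ∧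
      (∀ θ ∈ Icc a t, ‖deriv h θ‖ ≤ N * (t - θ)) ∧
      (∀ θ ∈ Icc a t, ‖deriv (deriv h) θ‖ ≤ N) := by
    obtain ⟨N0, hN0b⟩ := (isCompact_Icc (a := a) (b := t)).exists_bound_of_continuousOn
      hh2.continuous.continuousOn
    have hN0nn : 0 ≤ N0 := le_trans (norm_nonneg _) (hN0b a (left_mem_Icc.mpr hat.le))
    have hbd' : ∀ θ ∈ Icc a t, ‖deriv h θ‖ ≤ N0 * (t - θ) := by
      intro θ hθ
      have hmvt := Convex.norm_image_sub_le_of_norm_hasDerivWithin_le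
        (f := deriv h) (f' := deriv (deriv h)) (s := Icc a t) (C := N0)
        (fun x _ => ((hh1.differentiable (by norm_num)) x).hasDerivAt.hasDerivWithinAt)
        (fun x hx => hN0b x hx) (convex_Icc a t) (right_mem_Icc.mpr hat.le) hθ
      rw [hdt0, sub_zero] at hmvt
      calc ‖deriv h θ‖ ≤ N0 * ‖θ - t‖ := hmvt
        _ = N0 * (t - θ) := by
            rw [Real.norm_eq_abs, abs_sub_comm, abs_of_nonneg (by linarith [hθ.2])]
    refine ⟨N0, hN0nn, ?_, hbd', fun θ hθ => hN0b θ hθ⟩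
    intro θ hθ
    have hsub : Icc θ t ⊆ Icc a t := Icc_subset_Icc hθ.1 le_rfl
    have hmvt := Convex.norm_image_sub_le_of_norm_hasDerivWithin_le
      (f := h) (f' := deriv h) (s := Icc θ t) (C := N0 * (t - θ))
      (fun x _ => ((hh.differentiable (by norm_num)) x).hasDerivAt.hasDerivWithinAt)
      (fun x hx => le_trans (hbd' x (hsub hx))
        (mul_le_mul_of_nonneg_left (by linarith [hx.1]) hN0nn))
      (convex_Icc θ t) (right_mem_Icc.mpr hθ.2) (left_mem_Icc.mpr hθ.2)
    rw [hht0] at hmvt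
    have : ‖h θ‖ = ‖h θ - 0‖ := by simp
    rw [this]
    calc ‖h θ - 0‖ ≤ N0 * (t - θ) * ‖θ - t‖ := hmvt
      _ = N0 * (t - θ) * (t - θ) := by
          rw [Real.norm_eq_abs, abs_sub_comm, abs_of_nonneg (by linarith [hθ.2])]
  -- uniform bounds on A B C B1 C1 C2 on Icc
  obtain ⟨M, hM0, hMA, hMB, hMC, hMB1, hMC1, hMC2⟩ : ∃ M : ℝ, 0 ≤ M ∧
      (∀ θ ∈ Icc a t, ‖A θ‖ ≤ M) ∧ (∀ θ ∈ Icc a t, ‖B θ‖ ≤ M) ∧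
      (∀ θ ∈ Icc a t, ‖C θ‖ ≤ M) ∧ (∀ θ ∈ Icc a t, ‖B1 θ‖ ≤ M) ∧
      (∀ θ ∈ Icc a t, ‖C1 θ‖ ≤ M) ∧ (∀ θ ∈ Icc a t, ‖C2 θ‖ ≤ M) := by
    obtain ⟨MA, hMAb⟩ := isCompact_Icc.exists_bound_of_continuousOn hAs.continuousOn
    obtain ⟨MB, hMBb⟩ := isCompact_Icc.exists_bound_of_continuousOn hBs.continuousOn
    obtain ⟨MC, hMCb⟩ := isCompact_Icc.exists_bound_of_continuousOn hCs.continuousOn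
    obtain ⟨MB1, hMB1b⟩ := isCompact_Icc.exists_bound_of_continuousOn hB1s.continuousOn
    obtain ⟨MC1, hMC1b⟩ := isCompact_Icc.exists_bound_of_continuousOn hC1s.continuousOn
    obtain ⟨MC2, hMC2b⟩ := isCompact_Icc.exists_bound_of_continuousOn hC2s
    refine ⟨|MA| + |MB| + |MC| + |MB1| + |MC1| + |MC2|, by positivity, ?_, ?_, ?_, ?_, ?_, ?_⟩ <;>
      intro θ hθ
    · have := hMAb θ hθ
      have l : MA ≤ |MA| := le_abs_self _
      have := abs_nonneg MB; have := abs_nonneg MC; have := abs_nonneg MB1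
      have := abs_nonneg MC1; have := abs_nonneg MC2
      linarith [hMAb θ hθ]
    · have l : MB ≤ |MB| := le_abs_self _
      have := abs_nonneg MA; have := abs_nonneg MC; have := abs_nonneg MB1
      have := abs_nonneg MC1; have := abs_nonneg MC2
      linarith [hMBb θ hθ]
    · have l : MC ≤ |MC| := le_abs_self _
      have := abs_nonneg MA; have := abs_nonneg MB; have := abs_nonneg MB1
      have := abs_nonneg MC1; have := abs_nonneg MC2
      linarith [hMCb θ hθ]
    · have l : MB1 ≤ |MB1| := le_abs_self _
      have := abs_nonneg MA; have := abs_nonneg MB; have := abs_nonneg MC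
      have := abs_nonneg MC1; have := abs_nonneg MC2
      linarith [hMB1b θ hθ]
    · have l : MC1 ≤ |MC1| := le_abs_self _
      have := abs_nonneg MA; have := abs_nonneg MB; have := abs_nonneg MC
      have := abs_nonneg MB1; have := abs_nonneg MC2
      linarith [hMC1b θ hθ]
    · have l : MC2 ≤ |MC2| := le_abs_self _
      have := abs_nonneg MA; have := abs_nonneg MB; have := abs_nonneg MC
      have := abs_nonneg MB1; have := abs_nonneg MC1
      linarith [hMC2b θ hθ]
  -- continuity of integrands on Ioo
  have hABC_cont : ContinuousOn A (Icc a t) ∧ ContinuousOn B (Icc a t) ∧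
      ContinuousOn C (Icc a t) := ⟨hAs.continuousOn, hBs.continuousOn, hCs.continuousOn⟩
  have hw_cont : ContinuousOn w (Iio t) := by
    rw [hwdef]
    exact ContinuousOn.rpow_const (continuous_const.sub continuous_id).continuousOn
      (fun x hx => Or.inl (by simp only [mem_Iio] at hx; intro hc; linarith [sub_eq_zero.mp hc]))
  have hwio : ContinuousOn w (Ioo a t) := hw_cont.mono (fun x hx => hx.2)
  have hAio : ContinuousOn A (Ioo a t) := hAs.continuousOn.mono Ioo_subset_Icc_self
  have hBio : ContinuousOn B (Ioo a t) := hBs.continuousOn.mono Ioo_subset_Icc_self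
  have hCio : ContinuousOn C (Ioo a t) := hCs.continuousOn.mono Ioo_subset_Icc_self
  have hB1io : ContinuousOn B1 (Ioo a t) := hB1s.continuousOn.mono Ioo_subset_Icc_self
  have hC1io : ContinuousOn C1 (Ioo a t) := hC1s.continuousOn.mono Ioo_subset_Icc_self
  have hC2io : ContinuousOn C2 (Ioo a t) := hC2s.mono Ioo_subset_Icc_self
  have hg_cont : ContinuousOn g (Ioo a t) := by
    rw [hgdef]
    exact (((hAio.inner hh.continuous.continuousOn).add
      (hBio.inner hh1.continuous.continuousOn)).add
      (hCio.inner hh2.continuous.continuousOn)).mul hwio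
  have htne : ∀ x ∈ Ioo a t, t - x ≠ 0 := fun x hx => by
    have : (0:ℝ) < t - x := by linarith [hx.2]
    exact this.ne'
  have hc1c : ContinuousOn (fun θ : ℝ => (1 - α) / (t - θ)) (Ioo a t) :=
    continuousOn_const.div ((continuous_const.sub continuous_id).continuousOn) htne
  have hc2c : ContinuousOn (fun θ : ℝ => (1 - α) * (2 - α) / (t - θ) ^ 2) (Ioo a t) :=
    continuousOn_const.div (((continuous_const.sub continuous_id).pow 2).continuousOn)
      (fun x hx => pow_ne_zero 2 (htne x hx))
  have hψ_cont : ContinuousOn ψ (Ioo a t) := by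
    rw [hψdef]
    refine ContinuousOn.mul ?_ hwio
    refine ContinuousOn.inner ?_ hh.continuous.continuousOn
    exact ((hAio.sub hB1io).add hC2io).sub
      ((hc1c.smul (hBio.sub (hC1io.const_smul (2:ℝ)))).sub (hc2c.smul hCio))
  have hg_int : IntervalIntegrable g volume a t := by
    refine hdom g (M * (N * ((t-a)*(t-a)) + N * (t-a) + N)) hg_cont ?_
    intro θ hθ
    have hθI : θ ∈ Icc a t := Ioo_subset_Icc_self hθ
    have hd0 : (0:ℝ) < t - θ := by linarith [hθ.2]
    have hdta : t - θ ≤ t - a := by linarith [hθ.1]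
    have hw0 : 0 ≤ w θ := (hw_pos θ hθ).le
    have e1 : |⟪A θ, h θ⟫_ℝ| ≤ M * (N * ((t-θ)*(t-θ))) := by
      refine le_trans (abs_real_inner_le_norm _ _) ?_
      have := mul_le_mul (hMA θ hθI) (hNh θ hθI) (norm_nonneg _) hM0
      calc ‖A θ‖ * ‖h θ‖ ≤ M * (N * (t-θ) * (t-θ)) := this
        _ = M * (N * ((t-θ)*(t-θ))) := by ring
    have e2 : |⟪B θ, deriv h θ⟫_ℝ| ≤ M * (N * (t-θ)) :=
      le_trans (abs_real_inner_le_norm _ _)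
        (mul_le_mul (hMB θ hθI) (hNh' θ hθI) (norm_nonneg _) hM0)
    have e3 : |⟪C θ, deriv (deriv h) θ⟫_ℝ| ≤ M * N :=
      le_trans (abs_real_inner_le_norm _ _)
        (mul_le_mul (hMC θ hθI) (hNh'' θ hθI) (norm_nonneg _) hM0)
    rw [hgdef]
    simp only [Real.norm_eq_abs]
    rw [abs_mul, abs_of_nonneg hw0]
    refine mul_le_mul_of_nonneg_right ?_ hw0
    have habs : |⟪A θ, h θ⟫_ℝ + ⟪B θ, deriv h θ⟫_ℝ + ⟪C θ, deriv (deriv h) θ⟫_ℝ|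
        ≤ |⟪A θ, h θ⟫_ℝ| + |⟪B θ, deriv h θ⟫_ℝ| + |⟪C θ, deriv (deriv h) θ⟫_ℝ| :=
      (abs_add_three _ _ _)
    have key : M * (N * ((t-θ)*(t-θ))) + M * (N * (t-θ)) + M * N
        ≤ M * (N * ((t-a)*(t-a)) + N * (t-a) + N) := by
      have hMN : 0 ≤ M * N := mul_nonneg hM0 hN0
      have p1 : M*N*((t-θ)*(t-θ)) ≤ M*N*((t-a)*(t-a)) :=
        mul_le_mul_of_nonneg_left
          (mul_le_mul hdta hdta hd0.le (le_trans hd0.le hdta)) hMN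
      have p2 : M*N*(t-θ) ≤ M*N*(t-a) := mul_le_mul_of_nonneg_left hdta hMN
      nlinarith [p1, p2]
    linarith
  have hψ_int : IntervalIntegrable ψ volume a t := by
    refine hdom ψ (M * N * (3*((t-a)*(t-a)) + 3*(t-a) + 2)) hψ_cont ?_
    intro θ hθ
    have hθI : θ ∈ Icc a t := Ioo_subset_Icc_self hθ
    have hd0 : (0:ℝ) < t - θ := by linarith [hθ.2]
    have hdta : t - θ ≤ t - a := by linarith [hθ.1]
    have hα' : (0:ℝ) ≤ 1 - α := by linarith
    have hα'' : (0:ℝ) ≤ 2 - α := by linarith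
    have hw0 : 0 ≤ w θ := (hw_pos θ hθ).le
    have n1 : ‖A θ - B1 θ + C2 θ‖ ≤ 3 * M := by
      have := norm_add_le (A θ - B1 θ) (C2 θ)
      have := norm_sub_le (A θ) (B1 θ)
      linarith [hMA θ hθI, hMB1 θ hθI, hMC2 θ hθI]
    have n2 : ‖((1 - α) / (t - θ)) • (B θ - (2:ℝ) • C1 θ)‖
        ≤ ((1 - α) / (t - θ)) * (3 * M) := by
      rw [norm_smul, Real.norm_eq_abs, abs_of_nonneg (div_nonneg hα' hd0.le)]
      refine mul_le_mul_of_nonneg_left ?_ (div_nonneg hα' hd0.le)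
      have h2c : ‖(2:ℝ) • C1 θ‖ = 2 * ‖C1 θ‖ := by
        rw [norm_smul, Real.norm_eq_abs]; norm_num
      have := norm_sub_le (B θ) ((2:ℝ) • C1 θ)
      rw [h2c] at this
      linarith [hMB θ hθI, hMC1 θ hθI]
    have n3 : ‖((1 - α) * (2 - α) / (t - θ) ^ 2) • C θ‖
        ≤ ((1 - α) * (2 - α) / (t - θ) ^ 2) * M := by
      rw [norm_smul, Real.norm_eq_abs,
        abs_of_nonneg (div_nonneg (mul_nonneg hα' hα'') (by positivity))]
      exact mul_le_mul_of_nonneg_left (hMC θ hθI)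
        (div_nonneg (mul_nonneg hα' hα'') (by positivity))
    have nV : ‖A θ - B1 θ + C2 θ - (((1 - α) / (t - θ)) • (B θ - (2:ℝ) • C1 θ)
        - ((1 - α) * (2 - α) / (t - θ) ^ 2) • C θ)‖
        ≤ 3 * M + (((1 - α) / (t - θ)) * (3 * M)
          + ((1 - α) * (2 - α) / (t - θ) ^ 2) * M) := by
      have t1 := norm_sub_le (A θ - B1 θ + C2 θ)
        (((1 - α) / (t - θ)) • (B θ - (2:ℝ) • C1 θ)
          - ((1 - α) * (2 - α) / (t - θ) ^ 2) • C θ)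
      have t2 := norm_sub_le (((1 - α) / (t - θ)) • (B θ - (2:ℝ) • C1 θ))
        (((1 - α) * (2 - α) / (t - θ) ^ 2) • C θ)
      linarith
    rw [hψdef]
    simp only [Real.norm_eq_abs]
    rw [abs_mul, abs_of_nonneg hw0]
    refine mul_le_mul_of_nonneg_right ?_ hw0
    have hinner : |⟪A θ - B1 θ + C2 θ - (((1 - α) / (t - θ)) • (B θ - (2:ℝ) • C1 θ)
        - ((1 - α) * (2 - α) / (t - θ) ^ 2) • C θ), h θ⟫_ℝ|
        ≤ (3 * M + (((1 - α) / (t - θ)) * (3 * M)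
          + ((1 - α) * (2 - α) / (t - θ) ^ 2) * M)) * (N * (t - θ) * (t - θ)) := by
      refine le_trans (abs_real_inner_le_norm _ _) ?_
      refine mul_le_mul nV (hNh θ hθI) (norm_nonneg _) ?_
      have d1 : 0 ≤ (1 - α) / (t - θ) := div_nonneg hα' hd0.le
      have d2 : 0 ≤ (1 - α) * (2 - α) / (t - θ) ^ 2 :=
        div_nonneg (mul_nonneg hα' hα'') (by positivity)
      nlinarith [hM0]
    refine le_trans hinner ?_
    have expand : (3 * M + (((1 - α) / (t - θ)) * (3 * M)
          + ((1 - α) * (2 - α) / (t - θ) ^ 2) * M)) * (N * (t - θ) * (t - θ))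
        = 3*M*N*((t-θ)*(t-θ)) + 3*(1-α)*M*N*(t-θ) + (1-α)*(2-α)*M*N := by
      field_simp
      ring
    rw [expand]
    have hMN : 0 ≤ M * N := mul_nonneg hM0 hN0
    have p1 : M*N*((t-θ)*(t-θ)) ≤ M*N*((t-a)*(t-a)) :=
      mul_le_mul_of_nonneg_left
        (mul_le_mul hdta hdta hd0.le (le_trans hd0.le hdta)) hMN
    have q1 : (1-α)*(t-θ) ≤ t-a := by nlinarith [hd0.le, hdta, hα', hα0]
    have p3 : M*N*((1-α)*(t-θ)) ≤ M*N*(t-a) := mul_le_mul_of_nonneg_left q1 hMN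
    have p4 : (1-α)*(2-α) ≤ 2 := by nlinarith [hα0.le, hα1]
    have p5 : ((1-α)*(2-α))*(M*N) ≤ 2*(M*N) := mul_le_mul_of_nonneg_right p4 hMN
    nlinarith [p1, p3, p5]
  -- derivative of φ
  have hφ' : ∀ θ ∈ Ioo a t, HasDerivAt φ (g θ - ψ θ) θ := by
    intro θ hθ
    have htθ : (0:ℝ) < t - θ := by linarith [hθ.2]
    have hB' : HasDerivAt B (B1 θ) θ := by
      have := hHD B (hBs.of_le (by norm_num)) θ hθ
      rwa [← hB1def] at this
    have hC' : HasDerivAt C (C1 θ) θ := by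
      have := hHD C (hCs.of_le (by norm_num)) θ hθ
      rwa [← hC1def] at this
    have hC1' : HasDerivAt C1 (C2 θ) θ := by
      have := hHD C1 hC1s θ hθ
      rwa [← hC2def] at this
    have hh' : HasDerivAt h (deriv h θ) θ :=
      ((hh.differentiable (by norm_num)) θ).hasDerivAt
    have hh'' : HasDerivAt (deriv h) (deriv (deriv h) θ) θ :=
      ((hh1.differentiable (by norm_num)) θ).hasDerivAt
    have hwid : HasDerivAt (fun s : ℝ => t - s) (-1) θ := by
      simpa using (hasDerivAt_id θ).const_sub t
    have hw' : HasDerivAt w ((1 - α) * (t - θ) ^ (α - 2)) θ := by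
      have h1 := (Real.hasDerivAt_rpow_const (x := t - θ) (p := α - 1)
        (Or.inl htθ.ne')).comp θ hwid
      simp only [Function.comp_def] at h1
      have e : α - 1 - 1 = α - 2 := by ring
      rw [e] at h1
      rw [hwdef]
      exact h1.congr_deriv (by ring)
    have hu' : HasDerivAt (fun s : ℝ => (1 - α) * (t - s) ^ (α - 2))
        ((1 - α) * ((2 - α) * (t - θ) ^ (α - 3))) θ := by
      have h1 := (Real.hasDerivAt_rpow_const (x := t - θ) (p := α - 2)
        (Or.inl htθ.ne')).comp θ hwid
      simp only [Function.comp_def] at h1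
      have h2 := h1.const_mul (1 - α)
      have e : α - 2 - 1 = α - 3 := by ring
      rw [e] at h2
      exact h2.congr_deriv (by ring)
    have T1 := hw'.mul (hB'.inner ℝ hh')
    have T2 := hw'.mul (hC'.inner ℝ hh'')
    have T3i := (hw'.smul hC1').add (hu'.smul hC')
    have T3 := T3i.inner ℝ hh'
    have TT := (T1.add T2).sub T3
    have r1 : (t-θ) ^ (α-2) = (t-θ) ^ (α-1) / (t-θ) := by
      rw [show α - 2 = (α - 1) - 1 by ring, Real.rpow_sub htθ, Real.rpow_one]
    have r2 : (t-θ) ^ (α-3) = (t-θ) ^ (α-1) / (t-θ)^2 := by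
      rw [show α - 3 = (α - 1) - 2 by ring, Real.rpow_sub htθ]
      norm_num [Real.rpow_natCast]
    rw [hφdef]
    convert TT using 1
    · rfl
    · rfl
    · rfl
    rw [hgdef, hψdef, hwdef]
    simp only [inner_add_left, inner_sub_left, real_inner_smul_left, inner_add_right,
      Pi.add_apply, Pi.smul_apply']
    rw [r1, r2]
    field_simp
    ring
  -- boundary limits of φ
  have hw2_cont : ContinuousOn (fun s : ℝ => (1 - α) * (t - s) ^ (α - 2)) (Iio t) := by
    refine continuousOn_const.mul ?_
    exact ContinuousOn.rpow_const (continuous_const.sub continuous_id).continuousOn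
      (fun x hx => Or.inl (by
        simp only [mem_Iio] at hx
        intro hc
        linarith [sub_eq_zero.mp hc]))
  have hφ_cont : ContinuousOn φ (Ico a t) := by
    have hwI : ContinuousOn w (Ico a t) := hw_cont.mono (fun x hx => hx.2)
    have hw2I : ContinuousOn (fun s : ℝ => (1 - α) * (t - s) ^ (α - 2)) (Ico a t) :=
      hw2_cont.mono (fun x hx => hx.2)
    have hBI : ContinuousOn B (Ico a t) := hBs.continuousOn.mono Ico_subset_Icc_self
    have hCI : ContinuousOn C (Ico a t) := hCs.continuousOn.mono Ico_subset_Icc_self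
    have hC1I : ContinuousOn C1 (Ico a t) := hC1s.continuousOn.mono Ico_subset_Icc_self
    have hhI : ContinuousOn h (Ico a t) := hh.continuous.continuousOn
    have hh1I : ContinuousOn (deriv h) (Ico a t) := hh1.continuous.continuousOn
    rw [hφdef]
    exact ((hwI.mul (hBI.inner hhI)).add (hwI.mul (hCI.inner hh1I))).sub
      (((hwI.smul hC1I).add (hw2I.smul hCI)).inner hhI)
  have hφa : Tendsto φ (𝓝[>] a) (𝓝 0) := by
    have hcw : ContinuousWithinAt φ (Ico a t) a := hφ_cont a (left_mem_Ico.mpr hat)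
    have h2 : Tendsto φ (𝓝[Ioo a t] a) (𝓝 (φ a)) := (hcw.mono Ioo_subset_Ico_self)
    rw [nhdsWithin_Ioo_eq_nhdsGT hat] at h2
    have hφ0 : φ a = 0 := by
      rw [hφdef]
      simp [hha0, hda0]
    rwa [hφ0] at h2
  have hφt : Tendsto φ (𝓝[<] t) (𝓝 0) := by
    have bnd : ∀ᶠ θ in 𝓝[<] t, ‖φ θ‖ ≤ (M*N*(2*(t-a)+2)) * (t - θ) ^ α := by
      filter_upwards [Ioo_mem_nhdsLT_of_mem (⟨hat, le_refl t⟩ : t ∈ Ioc a t)] with θ hθ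
      have hθI : θ ∈ Icc a t := Ioo_subset_Icc_self hθ
      have hd0 : (0:ℝ) < t - θ := by linarith [hθ.2]
      have hdta : t - θ ≤ t - a := by linarith [hθ.1]
      have hα' : (0:ℝ) ≤ 1 - α := by linarith
      have hw0 : 0 ≤ w θ := (hw_pos θ hθ).le
      have hwdθ : w θ = (t-θ) ^ (α-1) := by rw [hwdef]
      have hX0 : (0:ℝ) ≤ (t-θ) ^ α := Real.rpow_nonneg hd0.le _
      have e1 : (t-θ)^(α-1) * (t-θ) = (t-θ)^α := by
        rw [← Real.rpow_add_one hd0.ne']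
        ring_nf
      have e2 : (t-θ)^(α-2) * ((t-θ)*(t-θ)) = (t-θ)^α := by
        rw [show (t-θ)*(t-θ) = (t-θ)^(2:ℝ) by
          rw [show (2:ℝ) = ((2:ℕ):ℝ) by norm_num, Real.rpow_natCast]; ring]
        rw [← Real.rpow_add hd0]
        ring_nf
      have f1 : |⟪B θ, h θ⟫_ℝ| ≤ M * (N * ((t-θ)*(t-θ))) := by
        refine le_trans (abs_real_inner_le_norm _ _) ?_
        have := mul_le_mul (hMB θ hθI) (hNh θ hθI) (norm_nonneg _) hM0
        calc ‖B θ‖ * ‖h θ‖ ≤ M * (N * (t-θ) * (t-θ)) := this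
          _ = M * (N * ((t-θ)*(t-θ))) := by ring
      have f2 : |⟪C θ, deriv h θ⟫_ℝ| ≤ M * (N * (t-θ)) :=
        le_trans (abs_real_inner_le_norm _ _)
          (mul_le_mul (hMC θ hθI) (hNh' θ hθI) (norm_nonneg _) hM0)
      have f3 : ‖w θ • C1 θ + ((1-α) * (t-θ)^(α-2)) • C θ‖
          ≤ (t-θ)^(α-1) * M + (1-α) * (t-θ)^(α-2) * M := by
        refine le_trans (norm_add_le _ _) ?_
        have n1 : ‖w θ • C1 θ‖ ≤ (t-θ)^(α-1) * M := by
          rw [norm_smul, Real.norm_eq_abs, abs_of_nonneg hw0, hwdθ]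
          exact mul_le_mul_of_nonneg_left (hMC1 θ hθI)
            (Real.rpow_nonneg hd0.le _)
        have n2 : ‖((1-α) * (t-θ)^(α-2)) • C θ‖ ≤ (1-α) * (t-θ)^(α-2) * M := by
          rw [norm_smul, Real.norm_eq_abs,
            abs_of_nonneg (mul_nonneg hα' (Real.rpow_nonneg hd0.le _))]
          exact mul_le_mul_of_nonneg_left (hMC θ hθI)
            (mul_nonneg hα' (Real.rpow_nonneg hd0.le _))
        linarith
      have f4 : |⟪w θ • C1 θ + ((1-α) * (t-θ)^(α-2)) • C θ, h θ⟫_ℝ|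
          ≤ ((t-θ)^(α-1) * M + (1-α) * (t-θ)^(α-2) * M) * (N * (t-θ) * (t-θ)) := by
        refine le_trans (abs_real_inner_le_norm _ _) ?_
        refine mul_le_mul f3 (hNh θ hθI) (norm_nonneg _) ?_
        exact add_nonneg (mul_nonneg (Real.rpow_nonneg hd0.le _) hM0)
          (mul_nonneg (mul_nonneg hα' (Real.rpow_nonneg hd0.le _)) hM0)
      -- assemble
      have hMN : 0 ≤ M * N := mul_nonneg hM0 hN0
      have hMNX : 0 ≤ M * N * (t-θ)^α := mul_nonneg hMN hX0
      have k1 : |w θ| * |⟪B θ, h θ⟫_ℝ| ≤ M*N*((t-a)*(t-θ)^α) := by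
        rw [abs_of_nonneg hw0]
        calc w θ * |⟪B θ, h θ⟫_ℝ| ≤ w θ * (M * (N * ((t-θ)*(t-θ)))) :=
              mul_le_mul_of_nonneg_left f1 hw0
          _ = M*N*(((t-θ)^(α-1)*(t-θ))*(t-θ)) := by rw [hwdθ]; ring
          _ = M*N*((t-θ)^α*(t-θ)) := by rw [e1]
          _ ≤ M*N*((t-a)*(t-θ)^α) := by nlinarith [hMNX, hdta, hd0.le]
      have k2 : |w θ| * |⟪C θ, deriv h θ⟫_ℝ| ≤ M*N*(t-θ)^α := by
        rw [abs_of_nonneg hw0]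
        calc w θ * |⟪C θ, deriv h θ⟫_ℝ| ≤ w θ * (M * (N * (t-θ))) :=
              mul_le_mul_of_nonneg_left f2 hw0
          _ = M*N*((t-θ)^(α-1)*(t-θ)) := by rw [hwdθ]; ring
          _ = M*N*(t-θ)^α := by rw [e1]
      have k3 : |⟪w θ • C1 θ + ((1-α) * (t-θ)^(α-2)) • C θ, h θ⟫_ℝ|
          ≤ M*N*((t-a)*(t-θ)^α) + M*N*(t-θ)^α := by
        refine le_trans f4 ?_
        have expand : ((t-θ)^(α-1) * M + (1-α) * (t-θ)^(α-2) * M) * (N * (t-θ) * (t-θ))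
            = M*N*(((t-θ)^(α-1)*(t-θ))*(t-θ))
              + (1-α)*(M*N*((t-θ)^(α-2)*((t-θ)*(t-θ)))) := by ring
        rw [expand, e1, e2]
        nlinarith [hMNX, hdta, hd0.le, hα']
      have tri : ‖φ θ‖ ≤ |w θ| * |⟪B θ, h θ⟫_ℝ| + |w θ| * |⟪C θ, deriv h θ⟫_ℝ|
          + |⟪w θ • C1 θ + ((1-α) * (t-θ)^(α-2)) • C θ, h θ⟫_ℝ| := by
        rw [hφdef]
        simp only [Real.norm_eq_abs]
        have u1 := abs_sub (w θ * ⟪B θ, h θ⟫_ℝ + w θ * ⟪C θ, deriv h θ⟫_ℝ)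
          (⟪w θ • C1 θ + ((1-α) * (t-θ)^(α-2)) • C θ, h θ⟫_ℝ)
        have u2 := abs_add_le (w θ * ⟪B θ, h θ⟫_ℝ) (w θ * ⟪C θ, deriv h θ⟫_ℝ)
        rw [abs_mul, abs_mul] at u2
        linarith
      calc ‖φ θ‖ ≤ _ := tri
        _ ≤ M*N*((t-a)*(t-θ)^α) + M*N*(t-θ)^α
            + (M*N*((t-a)*(t-θ)^α) + M*N*(t-θ)^α) := by linarith
        _ = (M*N*(2*(t-a)+2)) * (t-θ)^α := by ring
    refine squeeze_zero_norm' bnd ?_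
    have l1 : Tendsto (fun θ : ℝ => t - θ) (𝓝[<] t) (𝓝 0) := by
      have hcont : Continuous (fun θ : ℝ => t - θ) := continuous_const.sub continuous_id
      have h0 := hcont.tendsto t
      rw [sub_self] at h0
      exact h0.mono_left nhdsWithin_le_nhds
    have l2 : Tendsto (fun x : ℝ => x ^ α) (𝓝 0) (𝓝 0) := by
      have hc : ContinuousAt (fun x : ℝ => x ^ α) 0 :=
        Real.continuousAt_rpow_const 0 α (Or.inr hα0.le)
      have := hc.tendsto
      rwa [Real.zero_rpow hα0.ne'] at this
    have := (l2.comp l1).const_mul (M*N*(2*(t-a)+2))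
    simpa [Function.comp] using this
  -- integration by parts: ∫ (g - ψ) = 0
  have hkey : (∫ θ in a..t, (g θ - ψ θ)) = 0 := by
    rw [integral_eq_sub_of_hasDerivAt_of_tendsto hat hφ' (hg_int.sub hψ_int) hφa hφt]
    simp
  have hψg : (∫ θ in a..t, ψ θ) = ∫ θ in a..t, g θ := by
    have := intervalIntegral.integral_sub hg_int hψ_int
    rw [hkey] at this
    linarith [this]
  -- differentiation under the integral sign
  have step1 : HasDerivAt (fun ε : ℝ =>
      ∫ θ in a..t, L (θ, q θ + ε • h θ, deriv q θ + ε • deriv h θ,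
          deriv (deriv q) θ + ε • deriv (deriv h) θ) * (t - θ) ^ (α - 1))
      (∫ θ in a..t, g θ) 0 := by
    have hdq_cont : ContinuousOn (deriv q) (Ioo a t) :=
      (hQ1s.continuousOn.mono Ioo_subset_Icc_self).congr (fun s hs => hq1 s hs)
    have hddq_cont : ContinuousOn (deriv (deriv q)) (Ioo a t) :=
      (hQ2s.continuousOn.mono Ioo_subset_Icc_self).congr (fun s hs => hq2 s hs)
    have hHc : Continuous H := by
      rw [hHdef]
      exact continuous_const.prodMk (hh.continuous.prodMk
        (hh1.continuous.prodMk hh2.continuous))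
    obtain ⟨MH, hMHb⟩ := (isCompact_Icc (a := a) (b := t)).exists_bound_of_continuousOn
      hHc.continuousOn
    have hMH0 : 0 ≤ MH := le_trans (norm_nonneg _) (hMHb a (left_mem_Icc.mpr hat.le))
    set Φ : ℝ × ℝ → ℝ × EuclideanSpace ℝ (Fin n) × EuclideanSpace ℝ (Fin n) ×
        EuclideanSpace ℝ (Fin n) := fun p => P p.1 + p.2 • H p.1 with hΦdef
    have hΦc : ContinuousOn Φ ((Icc a t) ×ˢ (Icc (-1:ℝ) 1)) := by
      rw [hΦdef]
      refine ContinuousOn.add ?_ ?_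
      · exact hPs.continuousOn.comp continuous_fst.continuousOn (fun p hp => hp.1)
      · exact ContinuousOn.smul continuous_snd.continuousOn
          (hHc.comp continuous_fst).continuousOn
    have hK2 : IsCompact (Φ '' ((Icc a t) ×ˢ (Icc (-1:ℝ) 1))) :=
      (isCompact_Icc.prod isCompact_Icc).image_of_continuousOn hΦc
    have hfdc : Continuous (fderiv ℝ L) := hL.continuous_fderiv (by norm_num)
    obtain ⟨M1, hM1b⟩ := hK2.exists_bound_of_continuousOn hfdc.continuousOn
    have hM10 : 0 ≤ M1 := by
      refine le_trans (norm_nonneg (fderiv ℝ L (Φ (a, 0)))) (hM1b _ ?_)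
      exact ⟨(a, 0), Set.mk_mem_prod (left_mem_Icc.mpr hat.le) (by norm_num), rfl⟩
    obtain ⟨M0, hM0b⟩ := (isCompact_Icc (a := a) (b := t)).exists_bound_of_continuousOn
      (hL.continuous.comp_continuousOn hPs.continuousOn)
    have key := intervalIntegral.hasDerivAt_integral_of_dominated_loc_of_deriv_le
      (μ := volume) (a := a) (b := t) (x₀ := (0:ℝ)) (s := Metric.ball 0 1)
      (F := fun x θ => L (θ, q θ + x • h θ, deriv q θ + x • deriv h θ,
          deriv (deriv q) θ + x • deriv (deriv h) θ) * w θ)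
      (F' := fun x θ => (fderiv ℝ L (P θ + x • H θ)) (H θ) * w θ)
      (bound := fun θ => M1 * MH * w θ)
      (Metric.ball_mem_nhds _ one_pos) ?meas ?int ?meas' ?bd ?bint ?diff
    case meas =>
      refine Filter.Eventually.of_forall (fun x => hmeas _ ?_)
      refine ContinuousOn.mul ?_ hwio
      refine hL.continuous.comp_continuousOn ?_
      refine ContinuousOn.prodMk continuousOn_id (ContinuousOn.prodMk ?_
        (ContinuousOn.prodMk ?_ ?_))
      · exact (hq.continuousOn.mono Ioo_subset_Icc_self).add
          (hh.continuous.continuousOn.const_smul x)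
      · exact hdq_cont.add (hh1.continuous.continuousOn.const_smul x)
      · exact hddq_cont.add (hh2.continuous.continuousOn.const_smul x)
    case int =>
      refine hdom _ |M0| ?_ ?_
      · refine ContinuousOn.mul ?_ hwio
        refine hL.continuous.comp_continuousOn ?_
        refine ContinuousOn.prodMk continuousOn_id (ContinuousOn.prodMk ?_
          (ContinuousOn.prodMk ?_ ?_))
        · exact (hq.continuousOn.mono Ioo_subset_Icc_self).add
            (hh.continuous.continuousOn.const_smul (0:ℝ))
        · exact hdq_cont.add (hh1.continuous.continuousOn.const_smul (0:ℝ))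
        · exact hddq_cont.add (hh2.continuous.continuousOn.const_smul (0:ℝ))
      · intro θ hθ
        have htup : (θ, q θ + (0:ℝ) • h θ, deriv q θ + (0:ℝ) • deriv h θ,
            deriv (deriv q) θ + (0:ℝ) • deriv (deriv h) θ) = P θ := by
          rw [hPdef]
          simp [hq1 θ hθ, hq2 θ hθ]
        rw [Real.norm_eq_abs, abs_mul, abs_of_nonneg (hw_pos θ hθ).le, htup]
        refine mul_le_mul_of_nonneg_right ?_ (hw_pos θ hθ).le
        calc |L (P θ)| = ‖L (P θ)‖ := (Real.norm_eq_abs _).symm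
          _ ≤ M0 := hM0b θ (Ioo_subset_Icc_self hθ)
          _ ≤ |M0| := le_abs_self _
    case meas' =>
      refine hmeas _ ?_
      refine ContinuousOn.mul ?_ hwio
      refine ContinuousOn.clm_apply ?_ hHc.continuousOn
      exact hfdc.comp_continuousOn ((hPs.continuousOn.mono Ioo_subset_Icc_self).add
        (hHc.continuousOn.const_smul (0:ℝ)))
    case bd =>
      refine hae _ ?_
      intro θ hθ x hx
      have hw0 := (hw_pos θ hθ).le
      have hmem : P θ + x • H θ ∈ Φ '' ((Icc a t) ×ˢ (Icc (-1:ℝ) 1)) := by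
        refine ⟨(θ, x), Set.mk_mem_prod (Ioo_subset_Icc_self hθ) ?_, rfl⟩
        have hx1 : |x| < 1 := by simpa [Real.norm_eq_abs] using mem_ball_zero_iff.mp hx
        exact abs_le.mp hx1.le
      rw [Real.norm_eq_abs, abs_mul, abs_of_nonneg hw0]
      refine mul_le_mul_of_nonneg_right ?_ hw0
      calc |(fderiv ℝ L (P θ + x • H θ)) (H θ)|
          = ‖(fderiv ℝ L (P θ + x • H θ)) (H θ)‖ := (Real.norm_eq_abs _).symm
        _ ≤ ‖fderiv ℝ L (P θ + x • H θ)‖ * ‖H θ‖ := ContinuousLinearMap.le_opNorm _ _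
        _ ≤ M1 * MH := mul_le_mul (hM1b _ hmem) (hMHb θ (Ioo_subset_Icc_self hθ))
            (norm_nonneg _) hM10
    case bint => exact hw_int.const_mul (M1 * MH)
    case diff =>
      refine hae _ ?_
      intro θ hθ x hx
      have htuple : ∀ y : ℝ, P θ + y • H θ = (θ, q θ + y • h θ,
          deriv q θ + y • deriv h θ, deriv (deriv q) θ + y • deriv (deriv h) θ) := by
        intro y
        rw [hPdef, hHdef]
        simp [Prod.ext_iff, hq1 θ hθ, hq2 θ hθ]
      have hinner : HasDerivAt (fun y : ℝ => P θ + y • H θ) (H θ) x := by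
        have := ((hasDerivAt_id x).smul_const (H θ)).const_add (P θ)
        simpa using this
      have hLf : HasFDerivAt L (fderiv ℝ L (P θ + x • H θ)) (P θ + x • H θ) :=
        (hL.differentiable (by norm_num) _).hasFDerivAt
      have hcomp := (hLf.comp_hasDerivAt x hinner).mul_const (w θ)
      refine HasDerivAt.congr_of_eventuallyEq hcomp
        (Filter.Eventually.of_forall (fun y => ?_))
      simp only [Function.comp]
      rw [htuple y]
    -- identify the value of the derivative
    have hval : (∫ θ in a..t, (fderiv ℝ L (P θ + (0:ℝ) • H θ)) (H θ) * w θ)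
        = ∫ θ in a..t, g θ := by
      refine intervalIntegral.integral_congr ?_
      intro θ _
      have e0 : P θ + (0:ℝ) • H θ = P θ := by simp
      simp only []
      rw [e0, hgdef]
      have hdecomp : H θ = iota2 n (h θ) + iota3 n (deriv h θ)
          + iota4 n (deriv (deriv h) θ) := by
        rw [hHdef]
        exact tuple_decomp _ _ _
      show (fderiv ℝ L (P θ)) (H θ) * w θ = _
      rw [hdecomp, map_add, map_add]
      simp only [hAdef, hBdef, hCdef, inner_Gr]
    rw [hval] at key
    exact key.2
  have := step1.const_mul (1 / Real.Gamma α)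
  convert this using 2
  · rfl
  · rfl
  rw [← hψg]
  refine intervalIntegral.integral_congr_ae (hae _ ?_)
  intro θ hθ
  exact hclaim θ hθ
end
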